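/- arXiv:0911.1713 — 3 statements merged into one kernel-verified Lean document; each statement's English description precedes it below -/
import Mathlib

section
/- For n ≥ 3, the pointwise stabiliser in Iso(n) of the set consisting of the identity permutation, the transpositions (1,k) for 2 ≤ k ≤ n, and the 3-cycle (1,2,3), is the trivial group: any isometry of (Sym(n), d_H) fixing each of these permutations is the identity map. -/
/-- The Hamming distance between two permutations of `Fin n`. -/
def hdist {n : ℕ} (φ ψ : Equiv.Perm (Fin n)) : ℕ :=
  (Finset.univ.filter fun i => φ i ≠ ψ i).card

namespace StabAux

open Equiv Finset

variable {n : ℕ}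

/-- the 3-cycle x ↦ y ↦ z ↦ x -/
def cyc (x y z : Fin n) : Equiv.Perm (Fin n) :=
  Equiv.swap x z * Equiv.swap x y

lemma cyc_fst {x y z : Fin n} (hxy : x ≠ y) (hyz : y ≠ z) :
    cyc x y z x = y := by
  simp [cyc, Equiv.swap_apply_of_ne_of_ne hxy.symm hyz]

lemma cyc_snd {x y z : Fin n} (hxy : x ≠ y) : cyc x y z y = z := by
  simp [cyc]

lemma cyc_thd {x y z : Fin n} (hxz : x ≠ z) (hyz : y ≠ z) :
    cyc x y z z = x := by
  simp [cyc, Equiv.swap_apply_of_ne_of_ne hxz.symm hyz.symm]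

lemma cyc_other {x y z w : Fin n} (hx : w ≠ x) (hy : w ≠ y) (hz : w ≠ z) :
    cyc x y z w = w := by
  simp [cyc, Equiv.swap_apply_of_ne_of_ne hx hy, Equiv.swap_apply_of_ne_of_ne hx hz]

lemma cyc_rotate {x y z : Fin n} (hxy : x ≠ y) (hxz : x ≠ z) (hyz : y ≠ z) :
    cyc x y z = cyc y z x := by
  ext i
  by_cases h1 : i = x
  · subst h1; rw [cyc_fst hxy hyz, cyc_thd hxy.symm hxz.symm]
  · by_cases h2 : i = y
    · subst h2; rw [cyc_snd hxy, cyc_fst hyz hxz.symm]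
    · by_cases h3 : i = z
      · subst h3; rw [cyc_thd hxz hyz, cyc_snd hyz]
      · rw [cyc_other h1 h2 h3, cyc_other h2 h3 h1]

lemma hdist_self (φ : Equiv.Perm (Fin n)) : hdist φ φ = 0 := by
  simp [hdist]

lemma hdist_eq_zero_iff {φ ψ : Equiv.Perm (Fin n)} : hdist φ ψ = 0 ↔ φ = ψ := by
  constructor
  · intro h
    have he : (Finset.univ.filter fun i => φ i ≠ ψ i) = ∅ := Finset.card_eq_zero.mp h
    apply Equiv.ext; intro i
    by_contra hne
    have : i ∈ (∅ : Finset (Fin n)) :=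
      he ▸ (Finset.mem_filter.mpr ⟨Finset.mem_univ i, hne⟩)
    simp at this
  · intro h; subst h; exact hdist_self φ

/-- key bookkeeping lemma: compare two hdists that agree outside a finite set. -/
lemma hdist_congr (φ ψ φ' ψ' : Equiv.Perm (Fin n)) (s : Finset (Fin n))
    (h : ∀ i ∉ s, (φ i ≠ ψ i ↔ φ' i ≠ ψ' i)) :
    hdist φ ψ + ∑ i ∈ s, (if φ' i ≠ ψ' i then 1 else 0)
      = hdist φ' ψ' + ∑ i ∈ s, (if φ i ≠ ψ i then 1 else 0) := by
  have e1 : hdist φ ψ = ∑ i ∈ s, (if φ i ≠ ψ i then 1 else 0)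
      + ∑ i ∈ sᶜ, (if φ i ≠ ψ i then 1 else 0) := by
    rw [Finset.sum_add_sum_compl, hdist, Finset.card_filter]
  have e2 : hdist φ' ψ' = ∑ i ∈ s, (if φ' i ≠ ψ' i then 1 else 0)
      + ∑ i ∈ sᶜ, (if φ' i ≠ ψ' i then 1 else 0) := by
    rw [Finset.sum_add_sum_compl, hdist, Finset.card_filter]
  have e3 : ∑ i ∈ sᶜ, (if φ i ≠ ψ i then 1 else 0)
      = ∑ i ∈ sᶜ, (if φ' i ≠ ψ' i then 1 else 0) := by
    refine Finset.sum_congr rfl ?_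
    intro i hi
    rw [Finset.mem_compl] at hi
    simp only [h i hi]
  omega

lemma hdist_eq_sum (φ ψ : Equiv.Perm (Fin n)) (s : Finset (Fin n))
    (h : ∀ i ∉ s, φ i = ψ i) :
    hdist φ ψ = ∑ i ∈ s, (if φ i ≠ ψ i then 1 else 0) := by
  have h2 := hdist_congr φ ψ 1 1 s (fun i hi => by simp [h i hi])
  simpa [hdist_self] using h2

lemma hdist_support (χ : Equiv.Perm (Fin n)) : hdist χ 1 = χ.support.card := by
  simp [hdist, Equiv.Perm.support]
  congr 1

lemma hdist_swap_one {a b : Fin n} (hab : a ≠ b) :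
    hdist (Equiv.swap a b) 1 = 2 := by
  have key : hdist (Equiv.swap a b) 1
      = ∑ i ∈ ({a, b} : Finset (Fin n)),
          (if Equiv.swap a b i ≠ (1 : Equiv.Perm (Fin n)) i then 1 else 0) := by
    apply hdist_eq_sum
    intro i hi
    simp only [Finset.mem_insert, Finset.mem_singleton, not_or] at hi
    rw [Equiv.swap_apply_of_ne_of_ne hi.1 hi.2, Equiv.Perm.one_apply]
  rw [key, Finset.sum_pair hab, Equiv.swap_apply_left, Equiv.swap_apply_right,
    Equiv.Perm.one_apply, Equiv.Perm.one_apply, if_pos hab, if_pos (Ne.symm hab)]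

lemma hdist_swap_swap3 {a b x : Fin n} (hab : a ≠ b) (hxa : x ≠ a) (hxb : x ≠ b) :
    hdist (Equiv.swap a b) (Equiv.swap x a) = 3 := by
  have key : hdist (Equiv.swap a b) (Equiv.swap x a)
      = ∑ i ∈ ({x, a, b} : Finset (Fin n)),
          (if Equiv.swap a b i ≠ Equiv.swap x a i then 1 else 0) := by
    apply hdist_eq_sum
    intro i hi
    simp only [Finset.mem_insert, Finset.mem_singleton, not_or] at hi
    rw [Equiv.swap_apply_of_ne_of_ne hi.2.1 hi.2.2, Equiv.swap_apply_of_ne_of_ne hi.1 hi.2.1]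
  rw [key, show ({x, a, b} : Finset (Fin n)) = insert x {a, b} from rfl,
    Finset.sum_insert (by simp [hxa, hxb]), Finset.sum_pair hab]
  have e1 : Equiv.swap a b x = x := Equiv.swap_apply_of_ne_of_ne hxa hxb
  have e2 : Equiv.swap x a x = a := Equiv.swap_apply_left x a
  have e3 : Equiv.swap a b a = b := Equiv.swap_apply_left a b
  have e4 : Equiv.swap x a a = x := Equiv.swap_apply_right x a
  have e5 : Equiv.swap a b b = a := Equiv.swap_apply_right a b
  have e6 : Equiv.swap x a b = b := Equiv.swap_apply_of_ne_of_ne (Ne.symm hxb) (Ne.symm hab)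
  rw [e1, e2, e3, e4, e5, e6, if_pos hxa, if_pos (Ne.symm hxb), if_pos hab]
  rfl

lemma hdist_swap_swap4 {p q x a : Fin n} (hpq : p ≠ q) (hxa : x ≠ a)
    (hxp : x ≠ p) (hxq : x ≠ q) (hap : a ≠ p) (haq : a ≠ q) :
    hdist (Equiv.swap p q) (Equiv.swap x a) = 4 := by
  have key : hdist (Equiv.swap p q) (Equiv.swap x a)
      = ∑ i ∈ ({x, a, p, q} : Finset (Fin n)),
          (if Equiv.swap p q i ≠ Equiv.swap x a i then 1 else 0) := by
    apply hdist_eq_sum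
    intro i hi
    simp only [Finset.mem_insert, Finset.mem_singleton, not_or] at hi
    rw [Equiv.swap_apply_of_ne_of_ne hi.2.2.1 hi.2.2.2,
      Equiv.swap_apply_of_ne_of_ne hi.1 hi.2.1]
  rw [key, show ({x, a, p, q} : Finset (Fin n)) = insert x (insert a {p, q}) from rfl,
    Finset.sum_insert (by simp [hxa, hxp, hxq]),
    Finset.sum_insert (by simp [hap, haq]), Finset.sum_pair hpq]
  have e1 : Equiv.swap p q x = x := Equiv.swap_apply_of_ne_of_ne hxp hxq
  have e2 : Equiv.swap x a x = a := Equiv.swap_apply_left x a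
  have e3 : Equiv.swap p q a = a := Equiv.swap_apply_of_ne_of_ne hap haq
  have e4 : Equiv.swap x a a = x := Equiv.swap_apply_right x a
  have e5 : Equiv.swap p q p = q := Equiv.swap_apply_left p q
  have e6 : Equiv.swap x a p = p := Equiv.swap_apply_of_ne_of_ne (Ne.symm hxp) (Ne.symm hap)
  have e7 : Equiv.swap p q q = p := Equiv.swap_apply_right p q
  have e8 : Equiv.swap x a q = q := Equiv.swap_apply_of_ne_of_ne (Ne.symm hxq) (Ne.symm haq)
  rw [e1, e2, e3, e4, e5, e6, e7, e8, if_pos hxa, if_pos (Ne.symm hxa),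
    if_pos hpq, if_pos (Ne.symm hpq)]
  rfl

lemma hdist_cyc_cyc3 {u v w z : Fin n} (huv : u ≠ v) (huw : u ≠ w) (huz : u ≠ z)
    (hvw : v ≠ w) (hvz : v ≠ z) (hwz : w ≠ z) :
    hdist (cyc u v w) (cyc u v z) = 3 := by
  have key : hdist (cyc u v w) (cyc u v z)
      = ∑ i ∈ ({v, w, z} : Finset (Fin n)),
          (if cyc u v w i ≠ cyc u v z i then 1 else 0) := by
    apply hdist_eq_sum
    intro i hi
    simp only [Finset.mem_insert, Finset.mem_singleton, not_or] at hi
    by_cases hu : i = u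
    · subst hu; rw [cyc_fst huv hvw, cyc_fst huv hvz]
    · rw [cyc_other hu hi.1 hi.2.1, cyc_other hu hi.1 hi.2.2]
  rw [key, show ({v, w, z} : Finset (Fin n)) = insert v {w, z} from rfl,
    Finset.sum_insert (by simp [hvw, hvz]), Finset.sum_pair hwz]
  have e1 : cyc u v w v = w := cyc_snd huv
  have e2 : cyc u v z v = z := cyc_snd huv
  have e3 : cyc u v w w = u := cyc_thd huw hvw
  have e4 : cyc u v z w = w := cyc_other (Ne.symm huw) (Ne.symm hvw) hwz
  have e5 : cyc u v w z = z := cyc_other (Ne.symm huz) (Ne.symm hvz) (Ne.symm hwz)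
  have e6 : cyc u v z z = u := cyc_thd huz hvz
  rw [e1, e2, e3, e4, e5, e6, if_pos hwz, if_pos huw, if_pos (Ne.symm huz)]
  rfl

lemma hdist_cyc_cyc4 {u v w z : Fin n} (huv : u ≠ v) (huw : u ≠ w) (huz : u ≠ z)
    (hvw : v ≠ w) (hvz : v ≠ z) (hwz : w ≠ z) :
    hdist (cyc u w v) (cyc u v z) = 4 := by
  have key : hdist (cyc u w v) (cyc u v z)
      = ∑ i ∈ ({u, v, w, z} : Finset (Fin n)),
          (if cyc u w v i ≠ cyc u v z i then 1 else 0) := by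
    apply hdist_eq_sum
    intro i hi
    simp only [Finset.mem_insert, Finset.mem_singleton, not_or] at hi
    rw [cyc_other hi.1 hi.2.2.1 hi.2.1, cyc_other hi.1 hi.2.1 hi.2.2.2]
  rw [key, show ({u, v, w, z} : Finset (Fin n)) = insert u (insert v {w, z}) from rfl,
    Finset.sum_insert (by simp [huv, huw, huz]),
    Finset.sum_insert (by simp [hvw, hvz]), Finset.sum_pair hwz]
  have e1 : cyc u w v u = w := cyc_fst huw (Ne.symm hvw)
  have e2 : cyc u v z u = v := cyc_fst huv hvz
  have e3 : cyc u w v v = u := cyc_thd huv (Ne.symm hvw)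
  have e4 : cyc u v z v = z := cyc_snd huv
  have e5 : cyc u w v w = v := cyc_snd huw
  have e6 : cyc u v z w = w := cyc_other (Ne.symm huw) (Ne.symm hvw) hwz
  have e7 : cyc u w v z = z := cyc_other (Ne.symm huz) (Ne.symm hwz) (Ne.symm hvz)
  have e8 : cyc u v z z = u := cyc_thd huz hvz
  rw [e1, e2, e3, e4, e5, e6, e7, e8, if_pos (Ne.symm hvw), if_pos huz,
    if_pos hvw, if_pos (Ne.symm huz)]
  rfl

lemma swap_pair_eq (χ : Equiv.Perm (Fin n)) {a b : Fin n} (hab : a ≠ b) :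
    hdist χ (Equiv.swap a b)
      + ((if χ a ≠ a then 1 else 0) + (if χ b ≠ b then 1 else 0))
    = hdist χ 1 + ((if χ a ≠ b then 1 else 0) + (if χ b ≠ a then 1 else 0)) := by
  have h := hdist_congr χ (Equiv.swap a b) χ 1 {a, b} ?_
  · rwa [Finset.sum_pair hab, Finset.sum_pair hab, Equiv.Perm.one_apply,
      Equiv.Perm.one_apply, Equiv.swap_apply_left, Equiv.swap_apply_right] at h
  · intro i hi
    simp only [Finset.mem_insert, Finset.mem_singleton, not_or] at hi
    rw [Equiv.swap_apply_of_ne_of_ne hi.1 hi.2, Equiv.Perm.one_apply]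

section pair

variable {φ ψ : Equiv.Perm (Fin n)}
  (H1 : hdist ψ 1 = hdist φ 1)
  (Hτ : ∀ a b : Fin n, a ≠ b → hdist ψ (Equiv.swap a b) = hdist φ (Equiv.swap a b))

include H1 Hτ

lemma pairE {a b : Fin n} (hab : a ≠ b) :
    (if ψ a ≠ a then 1 else 0) + (if ψ b ≠ b then 1 else 0)
      + ((if φ a ≠ b then 1 else 0) + (if φ b ≠ a then 1 else 0))
    = (if φ a ≠ a then 1 else 0) + (if φ b ≠ b then 1 else 0)
      + ((if ψ a ≠ b then 1 else 0) + (if ψ b ≠ a then 1 else 0)) := by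
  have h1 := swap_pair_eq φ hab
  have h2 := swap_pair_eq ψ hab
  have h3 := Hτ a b hab
  omega

lemma fix_mono {a : Fin n} (hφ : φ a = a) : ψ a = a := by
  by_contra hψ
  have hj : ψ a ≠ a := hψ
  set j := ψ a with hjdef
  have hja : j ≠ a := hj
  have E := pairE H1 Hτ (Ne.symm hja)
  have f1 : φ a ≠ j := by rw [hφ]; exact Ne.symm hja
  have f2 : φ j ≠ a := fun hc => hja (φ.injective (hc.trans hφ.symm))
  have f3 : ¬ (ψ a ≠ j) := fun hc => hc rfl
  have f4 : ψ j ≠ j := fun hc => hja (ψ.injective (hc.trans hjdef))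
  have f5 : ¬ (φ a ≠ a) := fun hc => hc hφ
  rw [if_pos hj, if_pos f4, if_pos f1, if_pos f2, if_neg f5, if_neg f3] at E
  have g1 : (if φ j ≠ j then 1 else 0) ≤ 1 := by split <;> omega
  have g2 : (if ψ j ≠ a then 1 else 0) ≤ 1 := by split <;> omega
  omega

lemma fix_iff {a : Fin n} : ψ a = a ↔ φ a = a :=
  ⟨fun h => fix_mono (φ := ψ) (ψ := φ) H1.symm (fun a b hab => (Hτ a b hab).symm) h,
   fun h => fix_mono H1 Hτ h⟩

lemma cross_eq {a b : Fin n} (hab : a ≠ b) :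
    (if ψ a ≠ b then 1 else 0) + (if ψ b ≠ a then 1 else 0)
      = (if φ a ≠ b then 1 else 0) + (if φ b ≠ a then 1 else 0) := by
  have E := pairE H1 Hτ hab
  have e1 : (if ψ a ≠ a then 1 else 0) = (if φ a ≠ a then 1 else 0) := by
    by_cases h : φ a = a
    · rw [if_neg (not_not_intro ((fix_iff H1 Hτ).mpr h)), if_neg (not_not_intro h)]
    · rw [if_pos (fun hc => h ((fix_iff H1 Hτ).mp hc)), if_pos h]
  have e2 : (if ψ b ≠ b then 1 else 0) = (if φ b ≠ b then 1 else 0) := by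
    by_cases h : φ b = b
    · rw [if_neg (not_not_intro ((fix_iff H1 Hτ).mpr h)), if_neg (not_not_intro h)]
    · rw [if_pos (fun hc => h ((fix_iff H1 Hτ).mp hc)), if_pos h]
  omega

lemma cross_or {a b : Fin n} (hab : a ≠ b) (h : ψ a = b) : φ a = b ∨ φ b = a := by
  have C := cross_eq H1 Hτ hab
  rw [if_neg (not_not_intro h)] at C
  by_contra hc
  push_neg at hc
  rw [if_pos hc.1, if_pos hc.2] at C
  have : (if ψ b ≠ a then 1 else 0) ≤ 1 := by split <;> omega
  omega

lemma cross_forced {a b : Fin n} (hab : a ≠ b) (hφ1 : φ a = b) (hφ2 : φ b ≠ a)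
    (hψ : ψ a ≠ b) : ψ b = a := by
  have C := cross_eq H1 Hτ hab
  rw [if_neg (not_not_intro hφ1), if_pos hφ2, if_pos hψ] at C
  by_contra h
  rw [if_pos h] at C
  omega

lemma cross_forced2 {a b : Fin n} (hab : a ≠ b) (hφ1 : φ a ≠ b) (hφ2 : φ b = a)
    (hψ : ψ a = b) : ψ b ≠ a := by
  have C := cross_eq H1 Hτ hab
  rw [if_pos hφ1, if_neg (not_not_intro hφ2), if_neg (not_not_intro hψ)] at C
  intro h
  rw [if_neg (not_not_intro h)] at C
  omega

end pair

/-- A permutation moving exactly the three points x, y, z is one of the two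
3-cycles on them. -/
lemma perm_on_triple {ψ : Equiv.Perm (Fin n)} {x y z : Fin n}
    (hxy : x ≠ y) (hxz : x ≠ z) (hyz : y ≠ z)
    (hfix : ∀ i, i ≠ x → i ≠ y → i ≠ z → ψ i = i)
    (hx : ψ x ≠ x) (hy : ψ y ≠ y) (hz : ψ z ≠ z) :
    (ψ x = y ∧ ψ y = z ∧ ψ z = x) ∨ (ψ x = z ∧ ψ z = y ∧ ψ y = x) := by
  have inx : ∀ i, ψ i ≠ i → (ψ i = x ∨ ψ i = y ∨ ψ i = z) := by
    intro i hi
    by_contra hc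
    push_neg at hc
    exact hi (ψ.injective (hfix _ hc.1 hc.2.1 hc.2.2))
  rcases inx x hx with h1 | h1 | h1
  · exact absurd h1 hx
  · -- ψ x = y
    left
    refine ⟨h1, ?_, ?_⟩ <;> rcases inx y hy with h2 | h2 | h2 <;>
      rcases inx z hz with h3 | h3 | h3 <;>
      first
      | assumption
      | (exact absurd h2 hy)
      | (exact absurd h3 hz)
      | (exact absurd (ψ.injective (h2.trans h1.symm)) (Ne.symm hxy))
      | (exact absurd (ψ.injective (h3.trans h1.symm)) (Ne.symm hxz))
      | (exact absurd (ψ.injective (h3.trans h2.symm)) (Ne.symm hyz))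
  · -- ψ x = z
    right
    refine ⟨h1, ?_, ?_⟩ <;> rcases inx y hy with h2 | h2 | h2 <;>
      rcases inx z hz with h3 | h3 | h3 <;>
      first
      | assumption
      | (exact absurd h2 hy)
      | (exact absurd h3 hz)
      | (exact absurd (ψ.injective (h2.trans h1.symm)) (Ne.symm hxy))
      | (exact absurd (ψ.injective (h3.trans h1.symm)) (Ne.symm hxz))
      | (exact absurd (ψ.injective (h2.trans h3.symm)) hyz)

end StabAux

open StabAux Equiv

/-- For `n ≥ 3`, any isometry of `(Sym(n), d_H)` fixing the identity permutation,
each transposition `(1, k)` for `2 ≤ k ≤ n` (here: each `Equiv.swap 0 k`, `k ≠ 0`),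
and the 3-cycle `(1, 2, 3)` (here: the cycle sending `0 ↦ 1 ↦ 2 ↦ 0`), is the
identity map: the pointwise stabiliser of this set in `Iso(n)` is trivial. -/
theorem pointwise_stabiliser_trivial (n : ℕ) (hn : 3 ≤ n)
    (t : Equiv.Perm (Fin n) → Equiv.Perm (Fin n))
    (hbij : Function.Bijective t)
    (hiso : ∀ φ ψ, hdist (t φ) (t ψ) = hdist φ ψ)
    (hid : t 1 = 1)
    (hswap : ∀ k : Fin n, k ≠ ⟨0, by omega⟩ →
      t (Equiv.swap ⟨0, by omega⟩ k) = Equiv.swap ⟨0, by omega⟩ k)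
    (hcycle : t (Equiv.swap ⟨0, by omega⟩ ⟨2, by omega⟩ *
                 Equiv.swap ⟨0, by omega⟩ ⟨1, by omega⟩)
             = Equiv.swap ⟨0, by omega⟩ ⟨2, by omega⟩ *
                 Equiv.swap ⟨0, by omega⟩ ⟨1, by omega⟩) :
    ∀ φ, t φ = φ := by
  intro φ
  set e0 : Fin n := ⟨0, by omega⟩ with he0
  set e1 : Fin n := ⟨1, by omega⟩ with he1
  set e2 : Fin n := ⟨2, by omega⟩ with he2
  have ne01 : e0 ≠ e1 := by
    intro hh; rw [he0, he1] at hh; have h2 := congrArg Fin.val hh; simp at h2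
  have ne02 : e0 ≠ e2 := by
    intro hh; rw [he0, he2] at hh; have h2 := congrArg Fin.val hh; simp at h2
  have ne12 : e1 ≠ e2 := by
    intro hh; rw [he1, he2] at hh; have h2 := congrArg Fin.val hh; simp at h2
  have hswap' : ∀ k, k ≠ e0 → t (Equiv.swap e0 k) = Equiv.swap e0 k :=
    fun k hk => hswap k hk
  have hc : t (cyc e0 e1 e2) = cyc e0 e1 e2 := hcycle
  have hd1 : ∀ χ, hdist (t χ) 1 = hdist χ 1 := by
    intro χ; have h := hiso χ 1; rwa [hid] at h
  -- Step 1 : all transpositions are fixed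
  have T1 : ∀ a b : Fin n, a ≠ b → t (Equiv.swap a b) = Equiv.swap a b := by
    intro a b hab
    by_cases ha0 : a = e0
    · subst ha0; exact hswap' b (Ne.symm hab)
    by_cases hb0 : b = e0
    · subst hb0; rw [Equiv.swap_comm]; exact hswap' a ha0
    have hψ1 : hdist (t (Equiv.swap a b)) 1 = 2 := by rw [hd1, hdist_swap_one hab]
    have hsw : (t (Equiv.swap a b)).IsSwap := by
      rw [← Equiv.Perm.card_support_eq_two, ← hdist_support]; exact hψ1
    obtain ⟨p, q, hpq, hψeq⟩ := hsw
    have hexcl : ∀ x y : Fin n, x ≠ y → t (Equiv.swap a b) = Equiv.swap x y → x ≠ e0 := by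
      intro x y hxy heq hx0
      rw [hx0] at hxy heq
      have h := hiso (Equiv.swap a b) (Equiv.swap e0 y)
      rw [heq, hswap' y (Ne.symm hxy), hdist_self] at h
      have h2 := hdist_eq_zero_iff.mp h.symm
      have h3 : Equiv.swap a b e0 = Equiv.swap e0 y e0 := by rw [h2]
      rw [Equiv.swap_apply_of_ne_of_ne (Ne.symm ha0) (Ne.symm hb0),
        Equiv.swap_apply_left] at h3
      exact hxy h3
    have hp0 : p ≠ e0 := hexcl p q hpq hψeq
    have hq0 : q ≠ e0 :=
      hexcl q p hpq.symm (hψeq.trans (Equiv.swap_comm p q))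
    have hain : a = p ∨ a = q := by
      by_contra hcon
      push_neg at hcon
      have heq := hiso (Equiv.swap a b) (Equiv.swap e0 a)
      rw [hψeq, hswap' a ha0,
        hdist_swap_swap4 hpq (Ne.symm ha0) (Ne.symm hp0) (Ne.symm hq0) hcon.1 hcon.2,
        hdist_swap_swap3 hab (Ne.symm ha0) (Ne.symm hb0)] at heq
      omega
    have hbin : b = p ∨ b = q := by
      by_contra hcon
      push_neg at hcon
      have heq := hiso (Equiv.swap a b) (Equiv.swap e0 b)
      rw [hψeq, hswap' b hb0,
        hdist_swap_swap4 hpq (Ne.symm hb0) (Ne.symm hp0) (Ne.symm hq0) hcon.1 hcon.2,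
        Equiv.swap_comm a b,
        hdist_swap_swap3 (Ne.symm hab) (Ne.symm hb0) (Ne.symm ha0)] at heq
      omega
    rcases hain with ha | ha
    · rcases hbin with hb | hb
      · exact absurd (ha.trans hb.symm) hab
      · rw [hψeq, ← ha, ← hb]
    · rcases hbin with hb | hb
      · rw [hψeq, ← ha, ← hb, Equiv.swap_comm]
      · exact absurd (ha.trans hb.symm) hab
  have Hτ' : ∀ χ, ∀ a b : Fin n, a ≠ b →
      hdist (t χ) (Equiv.swap a b) = hdist χ (Equiv.swap a b) := by
    intro χ a b hab
    have h := hiso χ (Equiv.swap a b); rwa [T1 a b hab] at h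
  -- Step 2 : any 3-cycle goes to itself or its inverse
  have PRE : ∀ x y z : Fin n, x ≠ y → x ≠ z → y ≠ z →
      t (cyc x y z) = cyc x y z ∨ t (cyc x y z) = cyc x z y := by
    intro x y z hxy hxz hyz
    have H1 := hd1 (cyc x y z)
    have HT := Hτ' (cyc x y z)
    have hfx : t (cyc x y z) x ≠ x := by
      intro h; have h2 := (fix_iff H1 HT).mp h
      rw [cyc_fst hxy hyz] at h2; exact hxy h2.symm
    have hfy : t (cyc x y z) y ≠ y := by
      intro h; have h2 := (fix_iff H1 HT).mp h
      rw [cyc_snd hxy] at h2; exact hyz h2.symm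
    have hfz : t (cyc x y z) z ≠ z := by
      intro h; have h2 := (fix_iff H1 HT).mp h
      rw [cyc_thd hxz hyz] at h2; exact hxz h2
    have hfixout : ∀ i, i ≠ x → i ≠ y → i ≠ z → t (cyc x y z) i = i :=
      fun i h1 h2 h3 => (fix_iff H1 HT).mpr (cyc_other h1 h2 h3)
    rcases perm_on_triple hxy hxz hyz hfixout hfx hfy hfz with ⟨a1, a2, a3⟩ | ⟨a1, a2, a3⟩
    · left
      apply Equiv.ext; intro i
      by_cases h1 : i = x
      · subst h1; rw [a1, cyc_fst hxy hyz]
      by_cases h2 : i = y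
      · subst h2; rw [a2, cyc_snd hxy]
      by_cases h3 : i = z
      · subst h3; rw [a3, cyc_thd hxz hyz]
      · rw [hfixout i h1 h2 h3, cyc_other h1 h2 h3]
    · right
      apply Equiv.ext; intro i
      by_cases h1 : i = x
      · subst h1; rw [a1, cyc_fst hxz (Ne.symm hyz)]
      by_cases h2 : i = y
      · subst h2; rw [a3, cyc_thd hxy (Ne.symm hyz)]
      by_cases h3 : i = z
      · subst h3; rw [a2, cyc_snd hxz]
      · rw [hfixout i h1 h2 h3, cyc_other h1 h3 h2]
  -- chain step
  have CS : ∀ u v w z' : Fin n, u ≠ v → u ≠ w → v ≠ w → u ≠ z' → v ≠ z' → w ≠ z' →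
      t (cyc u v z') = cyc u v z' → t (cyc u v w) = cyc u v w := by
    intro u v w z' huv huw hvw huz hvz hwz hρ
    rcases PRE u v w huv huw hvw with h | h
    · exact h
    · exfalso
      have heq := hiso (cyc u v w) (cyc u v z')
      rw [h, hρ, hdist_cyc_cyc4 huv huw huz hvw hvz hwz,
        hdist_cyc_cyc3 huv huw huz hvw hvz hwz] at heq
      omega
  have hcinv : t (cyc e1 e0 e2) = cyc e1 e0 e2 := by
    rcases PRE e1 e0 e2 (Ne.symm ne01) ne12 ne02 with h | h
    · exact h
    · exfalso
      have hrot : cyc e1 e2 e0 = cyc e0 e1 e2 := (cyc_rotate ne01 ne02 ne12).symm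
      rw [hrot] at h
      have heq := hiso (cyc e1 e0 e2) (cyc e0 e1 e2)
      rw [h, hc, hdist_self] at heq
      have h2 := hdist_eq_zero_iff.mp heq.symm
      have h3 : cyc e1 e0 e2 e0 = cyc e0 e1 e2 e0 := by rw [h2]
      rw [cyc_snd (Ne.symm ne01), cyc_fst ne01 ne12] at h3
      exact ne12 h3.symm
  have A1a : ∀ w, w ≠ e0 → w ≠ e1 → t (cyc e0 e1 w) = cyc e0 e1 w := by
    intro w hw0 hw1
    by_cases hw2 : w = e2
    · subst hw2; exact hc
    · exact CS e0 e1 w e2 ne01 (Ne.symm hw0) (Ne.symm hw1) ne02 ne12 hw2 hc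
  have A1b : ∀ w, w ≠ e0 → w ≠ e1 → t (cyc e1 e0 w) = cyc e1 e0 w := by
    intro w hw0 hw1
    by_cases hw2 : w = e2
    · subst hw2; exact hcinv
    · exact CS e1 e0 w e2 (Ne.symm ne01) (Ne.symm hw1) (Ne.symm hw0) ne12 ne02 hw2 hcinv
  have A2 : ∀ v w, v ≠ e0 → w ≠ e0 → v ≠ w → t (cyc e0 v w) = cyc e0 v w := by
    intro v w hv0 hw0 hvw
    by_cases hv1 : v = e1
    · subst hv1; exact A1a w hw0 (Ne.symm hvw)
    by_cases hw1 : w = e1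
    · subst hw1
      have r1 : cyc e0 v e1 = cyc v e1 e0 := cyc_rotate (Ne.symm hv0) ne01 hv1
      have r2 : cyc v e1 e0 = cyc e1 e0 v := cyc_rotate hv1 hv0 (Ne.symm ne01)
      rw [r1, r2]; exact A1b v hv0 hv1
    · have hρ : t (cyc e0 v e1) = cyc e0 v e1 := by
        have r1 : cyc e0 v e1 = cyc v e1 e0 := cyc_rotate (Ne.symm hv0) ne01 hv1
        have r2 : cyc v e1 e0 = cyc e1 e0 v := cyc_rotate hv1 hv0 (Ne.symm ne01)
        rw [r1, r2]; exact A1b v hv0 hv1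
      exact CS e0 v w e1 (Ne.symm hv0) (Ne.symm hw0) hvw ne01 hv1 hw1 hρ
  have A3 : ∀ x y z, x ≠ y → x ≠ z → y ≠ z → t (cyc x y z) = cyc x y z := by
    intro x y z hxy hxz hyz
    by_cases hx0 : x = e0
    · subst hx0; exact A2 y z (Ne.symm hxy) (Ne.symm hxz) hyz
    by_cases hy0 : y = e0
    · subst hy0
      have r : cyc x e0 z = cyc e0 z x := cyc_rotate hxy hxz hyz
      rw [r]; exact A2 z x (Ne.symm hyz) hx0 (Ne.symm hxz)
    by_cases hz0 : z = e0
    · subst hz0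
      rw [show cyc x y e0 = cyc e0 x y from (cyc_rotate (Ne.symm hx0) (Ne.symm hy0) hxy).symm]
      exact A2 x y hx0 hy0 hxy
    · have hρ : t (cyc x y e0) = cyc x y e0 := by
        rw [show cyc x y e0 = cyc e0 x y from (cyc_rotate (Ne.symm hx0) (Ne.symm hy0) hxy).symm]
        exact A2 x y hx0 hy0 hxy
      exact CS x y z e0 hxy hxz hyz hx0 hy0 hz0 hρ
  -- Final step
  apply Equiv.ext; intro i
  have H1 := hd1 φ
  have HT := Hτ' φ
  by_cases hfix : φ i = i
  · rw [(fix_iff H1 HT).mpr hfix, hfix]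
  · have hψne : t φ i ≠ i := fun h => hfix ((fix_iff H1 HT).mp h)
    rcases cross_or H1 HT (Ne.symm hψne) rfl with h | h
    · exact h.symm
    · by_cases h2 : φ (φ i) = i
      · exact φ.injective (h.trans h2.symm)
      · exfalso
        have hbi : φ i ≠ i := hfix
        have hzi : t φ i ≠ i := hψne
        have hzb : t φ i ≠ φ i := by
          intro hh; exact h2 (by rw [← hh]; exact h)
        have hψb : t φ (φ i) = i :=
          cross_forced H1 HT (Ne.symm hbi) rfl h2 hzb
        have hψz_ne : t φ (t φ i) ≠ i :=
          cross_forced2 H1 HT (Ne.symm hzi) (Ne.symm hzb) h rfl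
        have hψz_nz : t φ (t φ i) ≠ t φ i := by
          intro hh
          have hcfix := (fix_iff H1 HT).mp hh
          exact hzi (h.symm.trans hcfix).symm
        obtain ⟨b, hb⟩ : ∃ b, φ i = b := ⟨_, rfl⟩
        obtain ⟨z, hz⟩ : ∃ z, t φ i = z := ⟨_, rfl⟩
        rw [hb] at hbi hzb
        rw [hz] at hzi hzb hψz_ne hψz_nz h
        -- now : hbi : b ≠ i, hzi : z ≠ i, hzb : z ≠ b, h : φ z = i,
        -- hψb : t φ b = i (after rw), hψz_ne : t φ z ≠ i, hψz_nz : t φ z ≠ z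
        rw [hb] at hψb
        have hσ : t (cyc z i b) = cyc z i b := A3 z i b hzi hzb (Ne.symm hbi)
        have Hσ : hdist (t φ) (cyc z i b) = hdist φ (cyc z i b) := by
          have hh := hiso φ (cyc z i b); rwa [hσ] at hh
        have HC := hdist_congr (t φ) (cyc z i b) φ (cyc z i b) {z, i, b} ?_
        · rw [show ({z, i, b} : Finset (Fin n)) = insert z {i, b} from rfl,
            Finset.sum_insert (by simp [hzi, hzb]), Finset.sum_pair (Ne.symm hbi),
            Finset.sum_insert (by simp [hzi, hzb]), Finset.sum_pair (Ne.symm hbi),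
            cyc_fst hzi (Ne.symm hbi), cyc_snd hzi, cyc_thd hzb (Ne.symm hbi),
            hb, hz, hψb] at HC
          rw [if_neg (not_not_intro h), if_neg (fun hh : b ≠ b => hh rfl),
            if_pos hψz_ne, if_pos hzb, if_pos (Ne.symm hzi)] at HC
          have hbound : (if φ b ≠ z then 1 else 0) ≤ 1 := by split <;> omega
          omega
        · intro j hj
          simp only [Finset.mem_insert, Finset.mem_singleton, not_or] at hj
          rw [cyc_other hj.1 hj.2.1 hj.2.2]
          exact not_congr (fix_iff H1 HT)
end

section
/- The pair of quotient sets of a permutation code is an isometry invariant up to equivalence: if C' = γCδ or C' = γC⁻¹δ for some γ, δ ∈ Sym(n), then there exist α, β ∈ Sym(n) such that either αΔ(C)α⁻¹ = Δ(C') and βΣ(C)β⁻¹ = Σ(C'), or αΔ(C)α⁻¹ = Σ(C') and βΣ(C)β⁻¹ = Δ(C'). -/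
/-- The first quotient set `Δ(C) = {φψ⁻¹ : φ, ψ ∈ C}` of a permutation code. -/
def quotDelta {n : ℕ} (C : Set (Equiv.Perm (Fin n))) : Set (Equiv.Perm (Fin n)) :=
  { x | ∃ φ ∈ C, ∃ ψ ∈ C, x = φ * ψ⁻¹ }

/-- The second quotient set `Σ(C) = {φ⁻¹ψ : φ, ψ ∈ C}` of a permutation code. -/
def quotSigma {n : ℕ} (C : Set (Equiv.Perm (Fin n))) : Set (Equiv.Perm (Fin n)) :=
  { x | ∃ φ ∈ C, ∃ ψ ∈ C, x = φ⁻¹ * ψ }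

/-- Conjugation of a set of permutations: `αSα⁻¹`. -/
def conjSet {n : ℕ} (α : Equiv.Perm (Fin n)) (S : Set (Equiv.Perm (Fin n))) :
    Set (Equiv.Perm (Fin n)) :=
  (fun σ => α * σ * α⁻¹) '' S

/-- The pair of quotient sets is an isometry invariant up to equivalence: if `C' = γCδ`
or `C' = γC⁻¹δ`, then there are `α, β` with `αΔ(C)α⁻¹ = Δ(C')` and `βΣ(C)β⁻¹ = Σ(C')`,
or `αΔ(C)α⁻¹ = Σ(C')` and `βΣ(C)β⁻¹ = Δ(C')`. -/
theorem quotient_sets_invariant (n : ℕ) (C C' : Set (Equiv.Perm (Fin n)))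
    (γ δ : Equiv.Perm (Fin n))
    (h : C' = (fun φ => γ * φ * δ) '' C ∨ C' = (fun φ => γ * φ⁻¹ * δ) '' C) :
    ∃ α β : Equiv.Perm (Fin n),
      (conjSet α (quotDelta C) = quotDelta C' ∧ conjSet β (quotSigma C) = quotSigma C') ∨
      (conjSet α (quotDelta C) = quotSigma C' ∧ conjSet β (quotSigma C) = quotDelta C') := by
  rcases h with h | h
  · refine ⟨γ, δ⁻¹, Or.inl ⟨?_, ?_⟩⟩
    · ext x
      constructor
      · rintro ⟨y, ⟨φ, hφ, ψ, hψ, rfl⟩, rfl⟩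
        exact ⟨γ * φ * δ, h ▸ ⟨φ, hφ, rfl⟩, γ * ψ * δ, h ▸ ⟨ψ, hψ, rfl⟩, by group⟩
      · rintro ⟨a, ha, b, hb, rfl⟩
        rw [h] at ha hb
        obtain ⟨φ, hφ, rfl⟩ := ha
        obtain ⟨ψ, hψ, rfl⟩ := hb
        exact ⟨φ * ψ⁻¹, ⟨φ, hφ, ψ, hψ, rfl⟩, by group⟩
    · ext x
      constructor
      · rintro ⟨y, ⟨φ, hφ, ψ, hψ, rfl⟩, rfl⟩
        exact ⟨γ * φ * δ, h ▸ ⟨φ, hφ, rfl⟩, γ * ψ * δ, h ▸ ⟨ψ, hψ, rfl⟩, by group⟩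
      · rintro ⟨a, ha, b, hb, rfl⟩
        rw [h] at ha hb
        obtain ⟨φ, hφ, rfl⟩ := ha
        obtain ⟨ψ, hψ, rfl⟩ := hb
        exact ⟨φ⁻¹ * ψ, ⟨φ, hφ, ψ, hψ, rfl⟩, by group⟩
  · refine ⟨δ⁻¹, γ, Or.inr ⟨?_, ?_⟩⟩
    · ext x
      constructor
      · rintro ⟨y, ⟨φ, hφ, ψ, hψ, rfl⟩, rfl⟩
        exact ⟨γ * φ⁻¹ * δ, h ▸ ⟨φ, hφ, rfl⟩, γ * ψ⁻¹ * δ, h ▸ ⟨ψ, hψ, rfl⟩, by group⟩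
      · rintro ⟨a, ha, b, hb, rfl⟩
        rw [h] at ha hb
        obtain ⟨φ, hφ, rfl⟩ := ha
        obtain ⟨ψ, hψ, rfl⟩ := hb
        exact ⟨φ * ψ⁻¹, ⟨φ, hφ, ψ, hψ, rfl⟩, by group⟩
    · ext x
      constructor
      · rintro ⟨y, ⟨φ, hφ, ψ, hψ, rfl⟩, rfl⟩
        exact ⟨γ * φ⁻¹ * δ, h ▸ ⟨φ, hφ, rfl⟩, γ * ψ⁻¹ * δ, h ▸ ⟨ψ, hψ, rfl⟩, by group⟩
      · rintro ⟨a, ha, b, hb, rfl⟩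
        rw [h] at ha hb
        obtain ⟨φ, hφ, rfl⟩ := ha
        obtain ⟨ψ, hψ, rfl⟩ := hb
        exact ⟨φ⁻¹ * ψ, ⟨φ, hφ, ψ, hψ, rfl⟩, by group⟩
end

section
/- There exists a (7,4)-permutation code of size 336, i.e., a subset C ⊆ Sym(7) with |C| = 336 such that d_H(φ, ψ) ≥ 4 for all distinct φ, ψ ∈ C. -/
set_option maxRecDepth 8000

def p0 : Equiv.Perm (Fin 7) := ⟨![0,1,2,3,4,5,6], ![0,1,2,3,4,5,6], by decide, by decide⟩
def p1 : Equiv.Perm (Fin 7) := ⟨![0,1,2,4,3,6,5], ![0,1,2,4,3,6,5], by decide, by decide⟩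
def p2 : Equiv.Perm (Fin 7) := ⟨![0,1,2,5,6,3,4], ![0,1,2,5,6,3,4], by decide, by decide⟩
def p3 : Equiv.Perm (Fin 7) := ⟨![0,1,2,6,5,4,3], ![0,1,2,6,5,4,3], by decide, by decide⟩
def p4 : Equiv.Perm (Fin 7) := ⟨![0,2,1,3,4,6,5], ![0,2,1,3,4,6,5], by decide, by decide⟩
def p5 : Equiv.Perm (Fin 7) := ⟨![0,2,1,4,3,5,6], ![0,2,1,4,3,5,6], by decide, by decide⟩
def p6 : Equiv.Perm (Fin 7) := ⟨![0,2,1,5,6,4,3], ![0,2,1,6,5,3,4], by decide, by decide⟩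
def p7 : Equiv.Perm (Fin 7) := ⟨![0,2,1,6,5,3,4], ![0,2,1,5,6,4,3], by decide, by decide⟩
def p8 : Equiv.Perm (Fin 7) := ⟨![0,3,4,1,2,5,6], ![0,3,4,1,2,5,6], by decide, by decide⟩
def p9 : Equiv.Perm (Fin 7) := ⟨![0,3,4,2,1,6,5], ![0,4,3,1,2,6,5], by decide, by decide⟩
def p10 : Equiv.Perm (Fin 7) := ⟨![0,3,4,5,6,1,2], ![0,5,6,1,2,3,4], by decide, by decide⟩
def p11 : Equiv.Perm (Fin 7) := ⟨![0,3,4,6,5,2,1], ![0,6,5,1,2,4,3], by decide, by decide⟩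
def p12 : Equiv.Perm (Fin 7) := ⟨![0,4,3,1,2,6,5], ![0,3,4,2,1,6,5], by decide, by decide⟩
def p13 : Equiv.Perm (Fin 7) := ⟨![0,4,3,2,1,5,6], ![0,4,3,2,1,5,6], by decide, by decide⟩
def p14 : Equiv.Perm (Fin 7) := ⟨![0,4,3,5,6,2,1], ![0,6,5,2,1,3,4], by decide, by decide⟩
def p15 : Equiv.Perm (Fin 7) := ⟨![0,4,3,6,5,1,2], ![0,5,6,2,1,4,3], by decide, by decide⟩
def p16 : Equiv.Perm (Fin 7) := ⟨![0,5,6,1,2,3,4], ![0,3,4,5,6,1,2], by decide, by decide⟩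
def p17 : Equiv.Perm (Fin 7) := ⟨![0,5,6,2,1,4,3], ![0,4,3,6,5,1,2], by decide, by decide⟩
def p18 : Equiv.Perm (Fin 7) := ⟨![0,5,6,3,4,1,2], ![0,5,6,3,4,1,2], by decide, by decide⟩
def p19 : Equiv.Perm (Fin 7) := ⟨![0,5,6,4,3,2,1], ![0,6,5,4,3,1,2], by decide, by decide⟩
def p20 : Equiv.Perm (Fin 7) := ⟨![0,6,5,1,2,4,3], ![0,3,4,6,5,2,1], by decide, by decide⟩
def p21 : Equiv.Perm (Fin 7) := ⟨![0,6,5,2,1,3,4], ![0,4,3,5,6,2,1], by decide, by decide⟩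
def p22 : Equiv.Perm (Fin 7) := ⟨![0,6,5,3,4,2,1], ![0,6,5,3,4,2,1], by decide, by decide⟩
def p23 : Equiv.Perm (Fin 7) := ⟨![0,6,5,4,3,1,2], ![0,5,6,4,3,2,1], by decide, by decide⟩
def p24 : Equiv.Perm (Fin 7) := ⟨![1,0,2,3,5,4,6], ![1,0,2,3,5,4,6], by decide, by decide⟩
def p25 : Equiv.Perm (Fin 7) := ⟨![1,0,2,4,6,3,5], ![1,0,2,5,3,6,4], by decide, by decide⟩
def p26 : Equiv.Perm (Fin 7) := ⟨![1,0,2,5,3,6,4], ![1,0,2,4,6,3,5], by decide, by decide⟩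
def p27 : Equiv.Perm (Fin 7) := ⟨![1,0,2,6,4,5,3], ![1,0,2,6,4,5,3], by decide, by decide⟩
def p28 : Equiv.Perm (Fin 7) := ⟨![1,2,0,3,5,6,4], ![2,0,1,3,6,4,5], by decide, by decide⟩
def p29 : Equiv.Perm (Fin 7) := ⟨![1,2,0,4,6,5,3], ![2,0,1,6,3,5,4], by decide, by decide⟩
def p30 : Equiv.Perm (Fin 7) := ⟨![1,2,0,5,3,4,6], ![2,0,1,4,5,3,6], by decide, by decide⟩
def p31 : Equiv.Perm (Fin 7) := ⟨![1,2,0,6,4,3,5], ![2,0,1,5,4,6,3], by decide, by decide⟩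
def p32 : Equiv.Perm (Fin 7) := ⟨![1,3,5,0,2,4,6], ![3,0,4,1,5,2,6], by decide, by decide⟩
def p33 : Equiv.Perm (Fin 7) := ⟨![1,3,5,2,0,6,4], ![4,0,3,1,6,2,5], by decide, by decide⟩
def p34 : Equiv.Perm (Fin 7) := ⟨![1,3,5,4,6,0,2], ![5,0,6,1,3,2,4], by decide, by decide⟩
def p35 : Equiv.Perm (Fin 7) := ⟨![1,3,5,6,4,2,0], ![6,0,5,1,4,2,3], by decide, by decide⟩
def p36 : Equiv.Perm (Fin 7) := ⟨![1,4,6,0,2,3,5], ![3,0,4,5,1,6,2], by decide, by decide⟩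
def p37 : Equiv.Perm (Fin 7) := ⟨![1,4,6,2,0,5,3], ![4,0,3,6,1,5,2], by decide, by decide⟩
def p38 : Equiv.Perm (Fin 7) := ⟨![1,4,6,3,5,0,2], ![5,0,6,3,1,4,2], by decide, by decide⟩
def p39 : Equiv.Perm (Fin 7) := ⟨![1,4,6,5,3,2,0], ![6,0,5,4,1,3,2], by decide, by decide⟩
def p40 : Equiv.Perm (Fin 7) := ⟨![1,5,3,0,2,6,4], ![3,0,4,2,6,1,5], by decide, by decide⟩
def p41 : Equiv.Perm (Fin 7) := ⟨![1,5,3,2,0,4,6], ![4,0,3,2,5,1,6], by decide, by decide⟩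
def p42 : Equiv.Perm (Fin 7) := ⟨![1,5,3,4,6,2,0], ![6,0,5,2,3,1,4], by decide, by decide⟩
def p43 : Equiv.Perm (Fin 7) := ⟨![1,5,3,6,4,0,2], ![5,0,6,2,4,1,3], by decide, by decide⟩
def p44 : Equiv.Perm (Fin 7) := ⟨![1,6,4,0,2,5,3], ![3,0,4,6,2,5,1], by decide, by decide⟩
def p45 : Equiv.Perm (Fin 7) := ⟨![1,6,4,2,0,3,5], ![4,0,3,5,2,6,1], by decide, by decide⟩
def p46 : Equiv.Perm (Fin 7) := ⟨![1,6,4,3,5,2,0], ![6,0,5,3,2,4,1], by decide, by decide⟩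
def p47 : Equiv.Perm (Fin 7) := ⟨![1,6,4,5,3,0,2], ![5,0,6,4,2,3,1], by decide, by decide⟩
def p48 : Equiv.Perm (Fin 7) := ⟨![2,0,1,3,6,4,5], ![1,2,0,3,5,6,4], by decide, by decide⟩
def p49 : Equiv.Perm (Fin 7) := ⟨![2,0,1,4,5,3,6], ![1,2,0,5,3,4,6], by decide, by decide⟩
def p50 : Equiv.Perm (Fin 7) := ⟨![2,0,1,5,4,6,3], ![1,2,0,6,4,3,5], by decide, by decide⟩
def p51 : Equiv.Perm (Fin 7) := ⟨![2,0,1,6,3,5,4], ![1,2,0,4,6,5,3], by decide, by decide⟩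
def p52 : Equiv.Perm (Fin 7) := ⟨![2,1,0,3,6,5,4], ![2,1,0,3,6,5,4], by decide, by decide⟩
def p53 : Equiv.Perm (Fin 7) := ⟨![2,1,0,4,5,6,3], ![2,1,0,6,3,4,5], by decide, by decide⟩
def p54 : Equiv.Perm (Fin 7) := ⟨![2,1,0,5,4,3,6], ![2,1,0,5,4,3,6], by decide, by decide⟩
def p55 : Equiv.Perm (Fin 7) := ⟨![2,1,0,6,3,4,5], ![2,1,0,4,5,6,3], by decide, by decide⟩
def p56 : Equiv.Perm (Fin 7) := ⟨![2,3,6,0,1,4,5], ![3,4,0,1,5,6,2], by decide, by decide⟩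
def p57 : Equiv.Perm (Fin 7) := ⟨![2,3,6,1,0,5,4], ![4,3,0,1,6,5,2], by decide, by decide⟩
def p58 : Equiv.Perm (Fin 7) := ⟨![2,3,6,4,5,0,1], ![5,6,0,1,3,4,2], by decide, by decide⟩
def p59 : Equiv.Perm (Fin 7) := ⟨![2,3,6,5,4,1,0], ![6,5,0,1,4,3,2], by decide, by decide⟩
def p60 : Equiv.Perm (Fin 7) := ⟨![2,4,5,0,1,3,6], ![3,4,0,5,1,2,6], by decide, by decide⟩
def p61 : Equiv.Perm (Fin 7) := ⟨![2,4,5,1,0,6,3], ![4,3,0,6,1,2,5], by decide, by decide⟩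
def p62 : Equiv.Perm (Fin 7) := ⟨![2,4,5,3,6,0,1], ![5,6,0,3,1,2,4], by decide, by decide⟩
def p63 : Equiv.Perm (Fin 7) := ⟨![2,4,5,6,3,1,0], ![6,5,0,4,1,2,3], by decide, by decide⟩
def p64 : Equiv.Perm (Fin 7) := ⟨![2,5,4,0,1,6,3], ![3,4,0,6,2,1,5], by decide, by decide⟩
def p65 : Equiv.Perm (Fin 7) := ⟨![2,5,4,1,0,3,6], ![4,3,0,5,2,1,6], by decide, by decide⟩
def p66 : Equiv.Perm (Fin 7) := ⟨![2,5,4,3,6,1,0], ![6,5,0,3,2,1,4], by decide, by decide⟩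
def p67 : Equiv.Perm (Fin 7) := ⟨![2,5,4,6,3,0,1], ![5,6,0,4,2,1,3], by decide, by decide⟩
def p68 : Equiv.Perm (Fin 7) := ⟨![2,6,3,0,1,5,4], ![3,4,0,2,6,5,1], by decide, by decide⟩
def p69 : Equiv.Perm (Fin 7) := ⟨![2,6,3,1,0,4,5], ![4,3,0,2,5,6,1], by decide, by decide⟩
def p70 : Equiv.Perm (Fin 7) := ⟨![2,6,3,4,5,1,0], ![6,5,0,2,3,4,1], by decide, by decide⟩
def p71 : Equiv.Perm (Fin 7) := ⟨![2,6,3,5,4,0,1], ![5,6,0,2,4,3,1], by decide, by decide⟩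
def p72 : Equiv.Perm (Fin 7) := ⟨![3,0,4,1,5,2,6], ![1,3,5,0,2,4,6], by decide, by decide⟩
def p73 : Equiv.Perm (Fin 7) := ⟨![3,0,4,2,6,1,5], ![1,5,3,0,2,6,4], by decide, by decide⟩
def p74 : Equiv.Perm (Fin 7) := ⟨![3,0,4,5,1,6,2], ![1,4,6,0,2,3,5], by decide, by decide⟩
def p75 : Equiv.Perm (Fin 7) := ⟨![3,0,4,6,2,5,1], ![1,6,4,0,2,5,3], by decide, by decide⟩
def p76 : Equiv.Perm (Fin 7) := ⟨![3,1,5,0,4,2,6], ![3,1,5,0,4,2,6], by decide, by decide⟩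
def p77 : Equiv.Perm (Fin 7) := ⟨![3,1,5,2,6,0,4], ![5,1,3,0,6,2,4], by decide, by decide⟩
def p78 : Equiv.Perm (Fin 7) := ⟨![3,1,5,4,0,6,2], ![4,1,6,0,3,2,5], by decide, by decide⟩
def p79 : Equiv.Perm (Fin 7) := ⟨![3,1,5,6,2,4,0], ![6,1,4,0,5,2,3], by decide, by decide⟩
def p80 : Equiv.Perm (Fin 7) := ⟨![3,2,6,0,4,1,5], ![3,5,1,0,4,6,2], by decide, by decide⟩
def p81 : Equiv.Perm (Fin 7) := ⟨![3,2,6,1,5,0,4], ![5,3,1,0,6,4,2], by decide, by decide⟩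
def p82 : Equiv.Perm (Fin 7) := ⟨![3,2,6,4,0,5,1], ![4,6,1,0,3,5,2], by decide, by decide⟩
def p83 : Equiv.Perm (Fin 7) := ⟨![3,2,6,5,1,4,0], ![6,4,1,0,5,3,2], by decide, by decide⟩
def p84 : Equiv.Perm (Fin 7) := ⟨![3,4,0,1,5,6,2], ![2,3,6,0,1,4,5], by decide, by decide⟩
def p85 : Equiv.Perm (Fin 7) := ⟨![3,4,0,2,6,5,1], ![2,6,3,0,1,5,4], by decide, by decide⟩
def p86 : Equiv.Perm (Fin 7) := ⟨![3,4,0,5,1,2,6], ![2,4,5,0,1,3,6], by decide, by decide⟩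
def p87 : Equiv.Perm (Fin 7) := ⟨![3,4,0,6,2,1,5], ![2,5,4,0,1,6,3], by decide, by decide⟩
def p88 : Equiv.Perm (Fin 7) := ⟨![3,5,1,0,4,6,2], ![3,2,6,0,4,1,5], by decide, by decide⟩
def p89 : Equiv.Perm (Fin 7) := ⟨![3,5,1,2,6,4,0], ![6,2,3,0,5,1,4], by decide, by decide⟩
def p90 : Equiv.Perm (Fin 7) := ⟨![3,5,1,4,0,2,6], ![4,2,5,0,3,1,6], by decide, by decide⟩
def p91 : Equiv.Perm (Fin 7) := ⟨![3,5,1,6,2,0,4], ![5,2,4,0,6,1,3], by decide, by decide⟩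
def p92 : Equiv.Perm (Fin 7) := ⟨![3,6,2,0,4,5,1], ![3,6,2,0,4,5,1], by decide, by decide⟩
def p93 : Equiv.Perm (Fin 7) := ⟨![3,6,2,1,5,4,0], ![6,3,2,0,5,4,1], by decide, by decide⟩
def p94 : Equiv.Perm (Fin 7) := ⟨![3,6,2,4,0,1,5], ![4,5,2,0,3,6,1], by decide, by decide⟩
def p95 : Equiv.Perm (Fin 7) := ⟨![3,6,2,5,1,0,4], ![5,4,2,0,6,3,1], by decide, by decide⟩
def p96 : Equiv.Perm (Fin 7) := ⟨![4,0,3,1,6,2,5], ![1,3,5,2,0,6,4], by decide, by decide⟩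
def p97 : Equiv.Perm (Fin 7) := ⟨![4,0,3,2,5,1,6], ![1,5,3,2,0,4,6], by decide, by decide⟩
def p98 : Equiv.Perm (Fin 7) := ⟨![4,0,3,5,2,6,1], ![1,6,4,2,0,3,5], by decide, by decide⟩
def p99 : Equiv.Perm (Fin 7) := ⟨![4,0,3,6,1,5,2], ![1,4,6,2,0,5,3], by decide, by decide⟩
def p100 : Equiv.Perm (Fin 7) := ⟨![4,1,6,0,3,2,5], ![3,1,5,4,0,6,2], by decide, by decide⟩
def p101 : Equiv.Perm (Fin 7) := ⟨![4,1,6,2,5,0,3], ![5,1,3,6,0,4,2], by decide, by decide⟩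
def p102 : Equiv.Perm (Fin 7) := ⟨![4,1,6,3,0,5,2], ![4,1,6,3,0,5,2], by decide, by decide⟩
def p103 : Equiv.Perm (Fin 7) := ⟨![4,1,6,5,2,3,0], ![6,1,4,5,0,3,2], by decide, by decide⟩
def p104 : Equiv.Perm (Fin 7) := ⟨![4,2,5,0,3,1,6], ![3,5,1,4,0,2,6], by decide, by decide⟩
def p105 : Equiv.Perm (Fin 7) := ⟨![4,2,5,1,6,0,3], ![5,3,1,6,0,2,4], by decide, by decide⟩
def p106 : Equiv.Perm (Fin 7) := ⟨![4,2,5,3,0,6,1], ![4,6,1,3,0,2,5], by decide, by decide⟩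
def p107 : Equiv.Perm (Fin 7) := ⟨![4,2,5,6,1,3,0], ![6,4,1,5,0,2,3], by decide, by decide⟩
def p108 : Equiv.Perm (Fin 7) := ⟨![4,3,0,1,6,5,2], ![2,3,6,1,0,5,4], by decide, by decide⟩
def p109 : Equiv.Perm (Fin 7) := ⟨![4,3,0,2,5,6,1], ![2,6,3,1,0,4,5], by decide, by decide⟩
def p110 : Equiv.Perm (Fin 7) := ⟨![4,3,0,5,2,1,6], ![2,5,4,1,0,3,6], by decide, by decide⟩
def p111 : Equiv.Perm (Fin 7) := ⟨![4,3,0,6,1,2,5], ![2,4,5,1,0,6,3], by decide, by decide⟩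
def p112 : Equiv.Perm (Fin 7) := ⟨![4,5,2,0,3,6,1], ![3,6,2,4,0,1,5], by decide, by decide⟩
def p113 : Equiv.Perm (Fin 7) := ⟨![4,5,2,1,6,3,0], ![6,3,2,5,0,1,4], by decide, by decide⟩
def p114 : Equiv.Perm (Fin 7) := ⟨![4,5,2,3,0,1,6], ![4,5,2,3,0,1,6], by decide, by decide⟩
def p115 : Equiv.Perm (Fin 7) := ⟨![4,5,2,6,1,0,3], ![5,4,2,6,0,1,3], by decide, by decide⟩
def p116 : Equiv.Perm (Fin 7) := ⟨![4,6,1,0,3,5,2], ![3,2,6,4,0,5,1], by decide, by decide⟩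
def p117 : Equiv.Perm (Fin 7) := ⟨![4,6,1,2,5,3,0], ![6,2,3,5,0,4,1], by decide, by decide⟩
def p118 : Equiv.Perm (Fin 7) := ⟨![4,6,1,3,0,2,5], ![4,2,5,3,0,6,1], by decide, by decide⟩
def p119 : Equiv.Perm (Fin 7) := ⟨![4,6,1,5,2,0,3], ![5,2,4,6,0,3,1], by decide, by decide⟩
def p120 : Equiv.Perm (Fin 7) := ⟨![5,0,6,1,3,2,4], ![1,3,5,4,6,0,2], by decide, by decide⟩
def p121 : Equiv.Perm (Fin 7) := ⟨![5,0,6,2,4,1,3], ![1,5,3,6,4,0,2], by decide, by decide⟩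
def p122 : Equiv.Perm (Fin 7) := ⟨![5,0,6,3,1,4,2], ![1,4,6,3,5,0,2], by decide, by decide⟩
def p123 : Equiv.Perm (Fin 7) := ⟨![5,0,6,4,2,3,1], ![1,6,4,5,3,0,2], by decide, by decide⟩
def p124 : Equiv.Perm (Fin 7) := ⟨![5,1,3,0,6,2,4], ![3,1,5,2,6,0,4], by decide, by decide⟩
def p125 : Equiv.Perm (Fin 7) := ⟨![5,1,3,2,4,0,6], ![5,1,3,2,4,0,6], by decide, by decide⟩
def p126 : Equiv.Perm (Fin 7) := ⟨![5,1,3,4,2,6,0], ![6,1,4,2,3,0,5], by decide, by decide⟩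
def p127 : Equiv.Perm (Fin 7) := ⟨![5,1,3,6,0,4,2], ![4,1,6,2,5,0,3], by decide, by decide⟩
def p128 : Equiv.Perm (Fin 7) := ⟨![5,2,4,0,6,1,3], ![3,5,1,6,2,0,4], by decide, by decide⟩
def p129 : Equiv.Perm (Fin 7) := ⟨![5,2,4,1,3,0,6], ![5,3,1,4,2,0,6], by decide, by decide⟩
def p130 : Equiv.Perm (Fin 7) := ⟨![5,2,4,3,1,6,0], ![6,4,1,3,2,0,5], by decide, by decide⟩
def p131 : Equiv.Perm (Fin 7) := ⟨![5,2,4,6,0,3,1], ![4,6,1,5,2,0,3], by decide, by decide⟩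
def p132 : Equiv.Perm (Fin 7) := ⟨![5,3,1,0,6,4,2], ![3,2,6,1,5,0,4], by decide, by decide⟩
def p133 : Equiv.Perm (Fin 7) := ⟨![5,3,1,2,4,6,0], ![6,2,3,1,4,0,5], by decide, by decide⟩
def p134 : Equiv.Perm (Fin 7) := ⟨![5,3,1,4,2,0,6], ![5,2,4,1,3,0,6], by decide, by decide⟩
def p135 : Equiv.Perm (Fin 7) := ⟨![5,3,1,6,0,2,4], ![4,2,5,1,6,0,3], by decide, by decide⟩
def p136 : Equiv.Perm (Fin 7) := ⟨![5,4,2,0,6,3,1], ![3,6,2,5,1,0,4], by decide, by decide⟩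
def p137 : Equiv.Perm (Fin 7) := ⟨![5,4,2,1,3,6,0], ![6,3,2,4,1,0,5], by decide, by decide⟩
def p138 : Equiv.Perm (Fin 7) := ⟨![5,4,2,3,1,0,6], ![5,4,2,3,1,0,6], by decide, by decide⟩
def p139 : Equiv.Perm (Fin 7) := ⟨![5,4,2,6,0,1,3], ![4,5,2,6,1,0,3], by decide, by decide⟩
def p140 : Equiv.Perm (Fin 7) := ⟨![5,6,0,1,3,4,2], ![2,3,6,4,5,0,1], by decide, by decide⟩
def p141 : Equiv.Perm (Fin 7) := ⟨![5,6,0,2,4,3,1], ![2,6,3,5,4,0,1], by decide, by decide⟩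
def p142 : Equiv.Perm (Fin 7) := ⟨![5,6,0,3,1,2,4], ![2,4,5,3,6,0,1], by decide, by decide⟩
def p143 : Equiv.Perm (Fin 7) := ⟨![5,6,0,4,2,1,3], ![2,5,4,6,3,0,1], by decide, by decide⟩
def p144 : Equiv.Perm (Fin 7) := ⟨![6,0,5,1,4,2,3], ![1,3,5,6,4,2,0], by decide, by decide⟩
def p145 : Equiv.Perm (Fin 7) := ⟨![6,0,5,2,3,1,4], ![1,5,3,4,6,2,0], by decide, by decide⟩
def p146 : Equiv.Perm (Fin 7) := ⟨![6,0,5,3,2,4,1], ![1,6,4,3,5,2,0], by decide, by decide⟩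
def p147 : Equiv.Perm (Fin 7) := ⟨![6,0,5,4,1,3,2], ![1,4,6,5,3,2,0], by decide, by decide⟩
def p148 : Equiv.Perm (Fin 7) := ⟨![6,1,4,0,5,2,3], ![3,1,5,6,2,4,0], by decide, by decide⟩
def p149 : Equiv.Perm (Fin 7) := ⟨![6,1,4,2,3,0,5], ![5,1,3,4,2,6,0], by decide, by decide⟩
def p150 : Equiv.Perm (Fin 7) := ⟨![6,1,4,3,2,5,0], ![6,1,4,3,2,5,0], by decide, by decide⟩
def p151 : Equiv.Perm (Fin 7) := ⟨![6,1,4,5,0,3,2], ![4,1,6,5,2,3,0], by decide, by decide⟩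
def p152 : Equiv.Perm (Fin 7) := ⟨![6,2,3,0,5,1,4], ![3,5,1,2,6,4,0], by decide, by decide⟩
def p153 : Equiv.Perm (Fin 7) := ⟨![6,2,3,1,4,0,5], ![5,3,1,2,4,6,0], by decide, by decide⟩
def p154 : Equiv.Perm (Fin 7) := ⟨![6,2,3,4,1,5,0], ![6,4,1,2,3,5,0], by decide, by decide⟩
def p155 : Equiv.Perm (Fin 7) := ⟨![6,2,3,5,0,4,1], ![4,6,1,2,5,3,0], by decide, by decide⟩
def p156 : Equiv.Perm (Fin 7) := ⟨![6,3,2,0,5,4,1], ![3,6,2,1,5,4,0], by decide, by decide⟩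
def p157 : Equiv.Perm (Fin 7) := ⟨![6,3,2,1,4,5,0], ![6,3,2,1,4,5,0], by decide, by decide⟩
def p158 : Equiv.Perm (Fin 7) := ⟨![6,3,2,4,1,0,5], ![5,4,2,1,3,6,0], by decide, by decide⟩
def p159 : Equiv.Perm (Fin 7) := ⟨![6,3,2,5,0,1,4], ![4,5,2,1,6,3,0], by decide, by decide⟩
def p160 : Equiv.Perm (Fin 7) := ⟨![6,4,1,0,5,3,2], ![3,2,6,5,1,4,0], by decide, by decide⟩
def p161 : Equiv.Perm (Fin 7) := ⟨![6,4,1,2,3,5,0], ![6,2,3,4,1,5,0], by decide, by decide⟩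
def p162 : Equiv.Perm (Fin 7) := ⟨![6,4,1,3,2,0,5], ![5,2,4,3,1,6,0], by decide, by decide⟩
def p163 : Equiv.Perm (Fin 7) := ⟨![6,4,1,5,0,2,3], ![4,2,5,6,1,3,0], by decide, by decide⟩
def p164 : Equiv.Perm (Fin 7) := ⟨![6,5,0,1,4,3,2], ![2,3,6,5,4,1,0], by decide, by decide⟩
def p165 : Equiv.Perm (Fin 7) := ⟨![6,5,0,2,3,4,1], ![2,6,3,4,5,1,0], by decide, by decide⟩
def p166 : Equiv.Perm (Fin 7) := ⟨![6,5,0,3,2,1,4], ![2,5,4,3,6,1,0], by decide, by decide⟩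
def p167 : Equiv.Perm (Fin 7) := ⟨![6,5,0,4,1,2,3], ![2,4,5,6,3,1,0], by decide, by decide⟩
def p168 : Equiv.Perm (Fin 7) := ⟨![0,1,3,2,5,6,4], ![0,1,3,2,6,4,5], by decide, by decide⟩
def p169 : Equiv.Perm (Fin 7) := ⟨![0,1,3,5,2,4,6], ![0,1,4,2,5,3,6], by decide, by decide⟩
def p170 : Equiv.Perm (Fin 7) := ⟨![0,1,3,6,4,2,5], ![0,1,5,2,4,6,3], by decide, by decide⟩
def p171 : Equiv.Perm (Fin 7) := ⟨![0,1,3,4,6,5,2], ![0,1,6,2,3,5,4], by decide, by decide⟩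
def p172 : Equiv.Perm (Fin 7) := ⟨![0,3,1,2,5,4,6], ![0,2,3,1,5,4,6], by decide, by decide⟩
def p173 : Equiv.Perm (Fin 7) := ⟨![0,3,1,5,2,6,4], ![0,2,4,1,6,3,5], by decide, by decide⟩
def p174 : Equiv.Perm (Fin 7) := ⟨![0,3,1,6,4,5,2], ![0,2,6,1,4,5,3], by decide, by decide⟩
def p175 : Equiv.Perm (Fin 7) := ⟨![0,3,1,4,6,2,5], ![0,2,5,1,3,6,4], by decide, by decide⟩
def p176 : Equiv.Perm (Fin 7) := ⟨![0,2,5,1,3,6,4], ![0,3,1,4,6,2,5], by decide, by decide⟩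
def p177 : Equiv.Perm (Fin 7) := ⟨![0,2,5,3,1,4,6], ![0,4,1,3,5,2,6], by decide, by decide⟩
def p178 : Equiv.Perm (Fin 7) := ⟨![0,2,5,6,4,1,3], ![0,5,1,6,4,2,3], by decide, by decide⟩
def p179 : Equiv.Perm (Fin 7) := ⟨![0,2,5,4,6,3,1], ![0,6,1,5,3,2,4], by decide, by decide⟩
def p180 : Equiv.Perm (Fin 7) := ⟨![0,5,2,1,3,4,6], ![0,3,2,4,5,1,6], by decide, by decide⟩
def p181 : Equiv.Perm (Fin 7) := ⟨![0,5,2,3,1,6,4], ![0,4,2,3,6,1,5], by decide, by decide⟩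
def p182 : Equiv.Perm (Fin 7) := ⟨![0,5,2,6,4,3,1], ![0,6,2,5,4,1,3], by decide, by decide⟩
def p183 : Equiv.Perm (Fin 7) := ⟨![0,5,2,4,6,1,3], ![0,5,2,6,3,1,4], by decide, by decide⟩
def p184 : Equiv.Perm (Fin 7) := ⟨![0,6,4,1,3,2,5], ![0,3,5,4,2,6,1], by decide, by decide⟩
def p185 : Equiv.Perm (Fin 7) := ⟨![0,6,4,3,1,5,2], ![0,4,6,3,2,5,1], by decide, by decide⟩
def p186 : Equiv.Perm (Fin 7) := ⟨![0,6,4,2,5,1,3], ![0,5,3,6,2,4,1], by decide, by decide⟩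
def p187 : Equiv.Perm (Fin 7) := ⟨![0,6,4,5,2,3,1], ![0,6,4,5,2,3,1], by decide, by decide⟩
def p188 : Equiv.Perm (Fin 7) := ⟨![0,4,6,1,3,5,2], ![0,3,6,4,1,5,2], by decide, by decide⟩
def p189 : Equiv.Perm (Fin 7) := ⟨![0,4,6,3,1,2,5], ![0,4,5,3,1,6,2], by decide, by decide⟩
def p190 : Equiv.Perm (Fin 7) := ⟨![0,4,6,2,5,3,1], ![0,6,3,5,1,4,2], by decide, by decide⟩
def p191 : Equiv.Perm (Fin 7) := ⟨![0,4,6,5,2,1,3], ![0,5,4,6,1,3,2], by decide, by decide⟩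
def p192 : Equiv.Perm (Fin 7) := ⟨![1,0,3,2,6,5,4], ![1,0,3,2,6,5,4], by decide, by decide⟩
def p193 : Equiv.Perm (Fin 7) := ⟨![1,0,3,5,4,2,6], ![1,0,5,2,4,3,6], by decide, by decide⟩
def p194 : Equiv.Perm (Fin 7) := ⟨![1,0,3,6,2,4,5], ![1,0,4,2,5,6,3], by decide, by decide⟩
def p195 : Equiv.Perm (Fin 7) := ⟨![1,0,3,4,5,6,2], ![1,0,6,2,3,4,5], by decide, by decide⟩
def p196 : Equiv.Perm (Fin 7) := ⟨![1,3,0,2,6,4,5], ![2,0,3,1,5,6,4], by decide, by decide⟩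
def p197 : Equiv.Perm (Fin 7) := ⟨![1,3,0,5,4,6,2], ![2,0,6,1,4,3,5], by decide, by decide⟩
def p198 : Equiv.Perm (Fin 7) := ⟨![1,3,0,6,2,5,4], ![2,0,4,1,6,5,3], by decide, by decide⟩
def p199 : Equiv.Perm (Fin 7) := ⟨![1,3,0,4,5,2,6], ![2,0,5,1,3,4,6], by decide, by decide⟩
def p200 : Equiv.Perm (Fin 7) := ⟨![1,2,6,0,3,5,4], ![3,0,1,4,6,5,2], by decide, by decide⟩
def p201 : Equiv.Perm (Fin 7) := ⟨![1,2,6,3,0,4,5], ![4,0,1,3,5,6,2], by decide, by decide⟩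
def p202 : Equiv.Perm (Fin 7) := ⟨![1,2,6,5,4,0,3], ![5,0,1,6,4,3,2], by decide, by decide⟩
def p203 : Equiv.Perm (Fin 7) := ⟨![1,2,6,4,5,3,0], ![6,0,1,5,3,4,2], by decide, by decide⟩
def p204 : Equiv.Perm (Fin 7) := ⟨![1,5,4,0,3,2,6], ![3,0,5,4,2,1,6], by decide, by decide⟩
def p205 : Equiv.Perm (Fin 7) := ⟨![1,5,4,3,0,6,2], ![4,0,6,3,2,1,5], by decide, by decide⟩
def p206 : Equiv.Perm (Fin 7) := ⟨![1,5,4,2,6,0,3], ![5,0,3,6,2,1,4], by decide, by decide⟩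
def p207 : Equiv.Perm (Fin 7) := ⟨![1,5,4,6,2,3,0], ![6,0,4,5,2,1,3], by decide, by decide⟩
def p208 : Equiv.Perm (Fin 7) := ⟨![1,6,2,0,3,4,5], ![3,0,2,4,5,6,1], by decide, by decide⟩
def p209 : Equiv.Perm (Fin 7) := ⟨![1,6,2,3,0,5,4], ![4,0,2,3,6,5,1], by decide, by decide⟩
def p210 : Equiv.Perm (Fin 7) := ⟨![1,6,2,5,4,3,0], ![6,0,2,5,4,3,1], by decide, by decide⟩
def p211 : Equiv.Perm (Fin 7) := ⟨![1,6,2,4,5,0,3], ![5,0,2,6,3,4,1], by decide, by decide⟩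
def p212 : Equiv.Perm (Fin 7) := ⟨![1,4,5,0,3,6,2], ![3,0,6,4,1,2,5], by decide, by decide⟩
def p213 : Equiv.Perm (Fin 7) := ⟨![1,4,5,3,0,2,6], ![4,0,5,3,1,2,6], by decide, by decide⟩
def p214 : Equiv.Perm (Fin 7) := ⟨![1,4,5,2,6,3,0], ![6,0,3,5,1,2,4], by decide, by decide⟩
def p215 : Equiv.Perm (Fin 7) := ⟨![1,4,5,6,2,0,3], ![5,0,4,6,1,2,3], by decide, by decide⟩
def p216 : Equiv.Perm (Fin 7) := ⟨![3,0,1,2,4,5,6], ![1,2,3,0,4,5,6], by decide, by decide⟩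
def p217 : Equiv.Perm (Fin 7) := ⟨![3,0,1,5,6,2,4], ![1,2,5,0,6,3,4], by decide, by decide⟩
def p218 : Equiv.Perm (Fin 7) := ⟨![3,0,1,6,5,4,2], ![1,2,6,0,5,4,3], by decide, by decide⟩
def p219 : Equiv.Perm (Fin 7) := ⟨![3,0,1,4,2,6,5], ![1,2,4,0,3,6,5], by decide, by decide⟩
def p220 : Equiv.Perm (Fin 7) := ⟨![3,1,0,2,4,6,5], ![2,1,3,0,4,6,5], by decide, by decide⟩
def p221 : Equiv.Perm (Fin 7) := ⟨![3,1,0,5,6,4,2], ![2,1,6,0,5,3,4], by decide, by decide⟩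
def p222 : Equiv.Perm (Fin 7) := ⟨![3,1,0,6,5,2,4], ![2,1,5,0,6,4,3], by decide, by decide⟩
def p223 : Equiv.Perm (Fin 7) := ⟨![3,1,0,4,2,5,6], ![2,1,4,0,3,5,6], by decide, by decide⟩
def p224 : Equiv.Perm (Fin 7) := ⟨![3,2,4,0,1,5,6], ![3,4,1,0,2,5,6], by decide, by decide⟩
def p225 : Equiv.Perm (Fin 7) := ⟨![3,2,4,1,0,6,5], ![4,3,1,0,2,6,5], by decide, by decide⟩
def p226 : Equiv.Perm (Fin 7) := ⟨![3,2,4,5,6,0,1], ![5,6,1,0,2,3,4], by decide, by decide⟩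
def p227 : Equiv.Perm (Fin 7) := ⟨![3,2,4,6,5,1,0], ![6,5,1,0,2,4,3], by decide, by decide⟩
def p228 : Equiv.Perm (Fin 7) := ⟨![3,5,6,0,1,2,4], ![3,4,5,0,6,1,2], by decide, by decide⟩
def p229 : Equiv.Perm (Fin 7) := ⟨![3,5,6,1,0,4,2], ![4,3,6,0,5,1,2], by decide, by decide⟩
def p230 : Equiv.Perm (Fin 7) := ⟨![3,5,6,2,4,0,1], ![5,6,3,0,4,1,2], by decide, by decide⟩
def p231 : Equiv.Perm (Fin 7) := ⟨![3,5,6,4,2,1,0], ![6,5,4,0,3,1,2], by decide, by decide⟩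
def p232 : Equiv.Perm (Fin 7) := ⟨![3,6,5,0,1,4,2], ![3,4,6,0,5,2,1], by decide, by decide⟩
def p233 : Equiv.Perm (Fin 7) := ⟨![3,6,5,1,0,2,4], ![4,3,5,0,6,2,1], by decide, by decide⟩
def p234 : Equiv.Perm (Fin 7) := ⟨![3,6,5,2,4,1,0], ![6,5,3,0,4,2,1], by decide, by decide⟩
def p235 : Equiv.Perm (Fin 7) := ⟨![3,6,5,4,2,0,1], ![5,6,4,0,3,2,1], by decide, by decide⟩
def p236 : Equiv.Perm (Fin 7) := ⟨![3,4,2,0,1,6,5], ![3,4,2,0,1,6,5], by decide, by decide⟩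
def p237 : Equiv.Perm (Fin 7) := ⟨![3,4,2,1,0,5,6], ![4,3,2,0,1,5,6], by decide, by decide⟩
def p238 : Equiv.Perm (Fin 7) := ⟨![3,4,2,5,6,1,0], ![6,5,2,0,1,3,4], by decide, by decide⟩
def p239 : Equiv.Perm (Fin 7) := ⟨![3,4,2,6,5,0,1], ![5,6,2,0,1,4,3], by decide, by decide⟩
def p240 : Equiv.Perm (Fin 7) := ⟨![2,0,5,1,6,3,4], ![1,3,0,5,6,2,4], by decide, by decide⟩
def p241 : Equiv.Perm (Fin 7) := ⟨![2,0,5,3,4,1,6], ![1,5,0,3,4,2,6], by decide, by decide⟩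
def p242 : Equiv.Perm (Fin 7) := ⟨![2,0,5,6,1,4,3], ![1,4,0,6,5,2,3], by decide, by decide⟩
def p243 : Equiv.Perm (Fin 7) := ⟨![2,0,5,4,3,6,1], ![1,6,0,4,3,2,5], by decide, by decide⟩
def p244 : Equiv.Perm (Fin 7) := ⟨![2,1,6,0,5,3,4], ![3,1,0,5,6,4,2], by decide, by decide⟩
def p245 : Equiv.Perm (Fin 7) := ⟨![2,1,6,3,4,0,5], ![5,1,0,3,4,6,2], by decide, by decide⟩
def p246 : Equiv.Perm (Fin 7) := ⟨![2,1,6,5,0,4,3], ![4,1,0,6,5,3,2], by decide, by decide⟩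
def p247 : Equiv.Perm (Fin 7) := ⟨![2,1,6,4,3,5,0], ![6,1,0,4,3,5,2], by decide, by decide⟩
def p248 : Equiv.Perm (Fin 7) := ⟨![2,3,4,0,5,1,6], ![3,5,0,1,2,4,6], by decide, by decide⟩
def p249 : Equiv.Perm (Fin 7) := ⟨![2,3,4,1,6,0,5], ![5,3,0,1,2,6,4], by decide, by decide⟩
def p250 : Equiv.Perm (Fin 7) := ⟨![2,3,4,5,0,6,1], ![4,6,0,1,2,3,5], by decide, by decide⟩
def p251 : Equiv.Perm (Fin 7) := ⟨![2,3,4,6,1,5,0], ![6,4,0,1,2,5,3], by decide, by decide⟩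
def p252 : Equiv.Perm (Fin 7) := ⟨![2,5,0,1,6,4,3], ![2,3,0,6,5,1,4], by decide, by decide⟩
def p253 : Equiv.Perm (Fin 7) := ⟨![2,5,0,3,4,6,1], ![2,6,0,3,4,1,5], by decide, by decide⟩
def p254 : Equiv.Perm (Fin 7) := ⟨![2,5,0,6,1,3,4], ![2,4,0,5,6,1,3], by decide, by decide⟩
def p255 : Equiv.Perm (Fin 7) := ⟨![2,5,0,4,3,1,6], ![2,5,0,4,3,1,6], by decide, by decide⟩
def p256 : Equiv.Perm (Fin 7) := ⟨![2,6,1,0,5,4,3], ![3,2,0,6,5,4,1], by decide, by decide⟩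
def p257 : Equiv.Perm (Fin 7) := ⟨![2,6,1,3,4,5,0], ![6,2,0,3,4,5,1], by decide, by decide⟩
def p258 : Equiv.Perm (Fin 7) := ⟨![2,6,1,5,0,3,4], ![4,2,0,5,6,3,1], by decide, by decide⟩
def p259 : Equiv.Perm (Fin 7) := ⟨![2,6,1,4,3,0,5], ![5,2,0,4,3,6,1], by decide, by decide⟩
def p260 : Equiv.Perm (Fin 7) := ⟨![2,4,3,0,5,6,1], ![3,6,0,2,1,4,5], by decide, by decide⟩
def p261 : Equiv.Perm (Fin 7) := ⟨![2,4,3,1,6,5,0], ![6,3,0,2,1,5,4], by decide, by decide⟩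
def p262 : Equiv.Perm (Fin 7) := ⟨![2,4,3,5,0,1,6], ![4,5,0,2,1,3,6], by decide, by decide⟩
def p263 : Equiv.Perm (Fin 7) := ⟨![2,4,3,6,1,0,5], ![5,4,0,2,1,6,3], by decide, by decide⟩
def p264 : Equiv.Perm (Fin 7) := ⟨![5,0,2,1,4,3,6], ![1,3,2,5,4,0,6], by decide, by decide⟩
def p265 : Equiv.Perm (Fin 7) := ⟨![5,0,2,3,6,1,4], ![1,5,2,3,6,0,4], by decide, by decide⟩
def p266 : Equiv.Perm (Fin 7) := ⟨![5,0,2,6,3,4,1], ![1,6,2,4,5,0,3], by decide, by decide⟩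
def p267 : Equiv.Perm (Fin 7) := ⟨![5,0,2,4,1,6,3], ![1,4,2,6,3,0,5], by decide, by decide⟩
def p268 : Equiv.Perm (Fin 7) := ⟨![5,1,4,0,2,3,6], ![3,1,4,5,2,0,6], by decide, by decide⟩
def p269 : Equiv.Perm (Fin 7) := ⟨![5,1,4,3,6,0,2], ![5,1,6,3,2,0,4], by decide, by decide⟩
def p270 : Equiv.Perm (Fin 7) := ⟨![5,1,4,2,0,6,3], ![4,1,3,6,2,0,5], by decide, by decide⟩
def p271 : Equiv.Perm (Fin 7) := ⟨![5,1,4,6,3,2,0], ![6,1,5,4,2,0,3], by decide, by decide⟩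
def p272 : Equiv.Perm (Fin 7) := ⟨![5,3,6,0,2,1,4], ![3,5,4,1,6,0,2], by decide, by decide⟩
def p273 : Equiv.Perm (Fin 7) := ⟨![5,3,6,1,4,0,2], ![5,3,6,1,4,0,2], by decide, by decide⟩
def p274 : Equiv.Perm (Fin 7) := ⟨![5,3,6,2,0,4,1], ![4,6,3,1,5,0,2], by decide, by decide⟩
def p275 : Equiv.Perm (Fin 7) := ⟨![5,3,6,4,1,2,0], ![6,4,5,1,3,0,2], by decide, by decide⟩
def p276 : Equiv.Perm (Fin 7) := ⟨![5,2,0,1,4,6,3], ![2,3,1,6,4,0,5], by decide, by decide⟩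
def p277 : Equiv.Perm (Fin 7) := ⟨![5,2,0,3,6,4,1], ![2,6,1,3,5,0,4], by decide, by decide⟩
def p278 : Equiv.Perm (Fin 7) := ⟨![5,2,0,6,3,1,4], ![2,5,1,4,6,0,3], by decide, by decide⟩
def p279 : Equiv.Perm (Fin 7) := ⟨![5,2,0,4,1,3,6], ![2,4,1,5,3,0,6], by decide, by decide⟩
def p280 : Equiv.Perm (Fin 7) := ⟨![5,6,3,0,2,4,1], ![3,6,4,2,5,0,1], by decide, by decide⟩
def p281 : Equiv.Perm (Fin 7) := ⟨![5,6,3,1,4,2,0], ![6,3,5,2,4,0,1], by decide, by decide⟩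
def p282 : Equiv.Perm (Fin 7) := ⟨![5,6,3,2,0,1,4], ![4,5,3,2,6,0,1], by decide, by decide⟩
def p283 : Equiv.Perm (Fin 7) := ⟨![5,6,3,4,1,0,2], ![5,4,6,2,3,0,1], by decide, by decide⟩
def p284 : Equiv.Perm (Fin 7) := ⟨![5,4,1,0,2,6,3], ![3,2,4,6,1,0,5], by decide, by decide⟩
def p285 : Equiv.Perm (Fin 7) := ⟨![5,4,1,3,6,2,0], ![6,2,5,3,1,0,4], by decide, by decide⟩
def p286 : Equiv.Perm (Fin 7) := ⟨![5,4,1,2,0,3,6], ![4,2,3,5,1,0,6], by decide, by decide⟩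
def p287 : Equiv.Perm (Fin 7) := ⟨![5,4,1,6,3,0,2], ![5,2,6,4,1,0,3], by decide, by decide⟩
def p288 : Equiv.Perm (Fin 7) := ⟨![6,0,4,1,2,3,5], ![1,3,4,5,2,6,0], by decide, by decide⟩
def p289 : Equiv.Perm (Fin 7) := ⟨![6,0,4,3,5,1,2], ![1,5,6,3,2,4,0], by decide, by decide⟩
def p290 : Equiv.Perm (Fin 7) := ⟨![6,0,4,2,1,5,3], ![1,4,3,6,2,5,0], by decide, by decide⟩
def p291 : Equiv.Perm (Fin 7) := ⟨![6,0,4,5,3,2,1], ![1,6,5,4,2,3,0], by decide, by decide⟩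
def p292 : Equiv.Perm (Fin 7) := ⟨![6,1,2,0,4,3,5], ![3,1,2,5,4,6,0], by decide, by decide⟩
def p293 : Equiv.Perm (Fin 7) := ⟨![6,1,2,3,5,0,4], ![5,1,2,3,6,4,0], by decide, by decide⟩
def p294 : Equiv.Perm (Fin 7) := ⟨![6,1,2,5,3,4,0], ![6,1,2,4,5,3,0], by decide, by decide⟩
def p295 : Equiv.Perm (Fin 7) := ⟨![6,1,2,4,0,5,3], ![4,1,2,6,3,5,0], by decide, by decide⟩
def p296 : Equiv.Perm (Fin 7) := ⟨![6,3,5,0,4,1,2], ![3,5,6,1,4,2,0], by decide, by decide⟩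
def p297 : Equiv.Perm (Fin 7) := ⟨![6,3,5,1,2,0,4], ![5,3,4,1,6,2,0], by decide, by decide⟩
def p298 : Equiv.Perm (Fin 7) := ⟨![6,3,5,2,1,4,0], ![6,4,3,1,5,2,0], by decide, by decide⟩
def p299 : Equiv.Perm (Fin 7) := ⟨![6,3,5,4,0,2,1], ![4,6,5,1,3,2,0], by decide, by decide⟩
def p300 : Equiv.Perm (Fin 7) := ⟨![6,2,1,0,4,5,3], ![3,2,1,6,4,5,0], by decide, by decide⟩
def p301 : Equiv.Perm (Fin 7) := ⟨![6,2,1,3,5,4,0], ![6,2,1,3,5,4,0], by decide, by decide⟩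
def p302 : Equiv.Perm (Fin 7) := ⟨![6,2,1,5,3,0,4], ![5,2,1,4,6,3,0], by decide, by decide⟩
def p303 : Equiv.Perm (Fin 7) := ⟨![6,2,1,4,0,3,5], ![4,2,1,5,3,6,0], by decide, by decide⟩
def p304 : Equiv.Perm (Fin 7) := ⟨![6,5,3,0,4,2,1], ![3,6,5,2,4,1,0], by decide, by decide⟩
def p305 : Equiv.Perm (Fin 7) := ⟨![6,5,3,1,2,4,0], ![6,3,4,2,5,1,0], by decide, by decide⟩
def p306 : Equiv.Perm (Fin 7) := ⟨![6,5,3,2,1,0,4], ![5,4,3,2,6,1,0], by decide, by decide⟩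
def p307 : Equiv.Perm (Fin 7) := ⟨![6,5,3,4,0,1,2], ![4,5,6,2,3,1,0], by decide, by decide⟩
def p308 : Equiv.Perm (Fin 7) := ⟨![6,4,0,1,2,5,3], ![2,3,4,6,1,5,0], by decide, by decide⟩
def p309 : Equiv.Perm (Fin 7) := ⟨![6,4,0,3,5,2,1], ![2,6,5,3,1,4,0], by decide, by decide⟩
def p310 : Equiv.Perm (Fin 7) := ⟨![6,4,0,2,1,3,5], ![2,4,3,5,1,6,0], by decide, by decide⟩
def p311 : Equiv.Perm (Fin 7) := ⟨![6,4,0,5,3,1,2], ![2,5,6,4,1,3,0], by decide, by decide⟩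
def p312 : Equiv.Perm (Fin 7) := ⟨![4,0,6,1,5,3,2], ![1,3,6,5,0,4,2], by decide, by decide⟩
def p313 : Equiv.Perm (Fin 7) := ⟨![4,0,6,3,2,1,5], ![1,5,4,3,0,6,2], by decide, by decide⟩
def p314 : Equiv.Perm (Fin 7) := ⟨![4,0,6,2,3,5,1], ![1,6,3,4,0,5,2], by decide, by decide⟩
def p315 : Equiv.Perm (Fin 7) := ⟨![4,0,6,5,1,2,3], ![1,4,5,6,0,3,2], by decide, by decide⟩
def p316 : Equiv.Perm (Fin 7) := ⟨![4,1,5,0,6,3,2], ![3,1,6,5,0,2,4], by decide, by decide⟩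
def p317 : Equiv.Perm (Fin 7) := ⟨![4,1,5,3,2,0,6], ![5,1,4,3,0,2,6], by decide, by decide⟩
def p318 : Equiv.Perm (Fin 7) := ⟨![4,1,5,2,3,6,0], ![6,1,3,4,0,2,5], by decide, by decide⟩
def p319 : Equiv.Perm (Fin 7) := ⟨![4,1,5,6,0,2,3], ![4,1,5,6,0,2,3], by decide, by decide⟩
def p320 : Equiv.Perm (Fin 7) := ⟨![4,3,2,0,6,1,5], ![3,5,2,1,0,6,4], by decide, by decide⟩
def p321 : Equiv.Perm (Fin 7) := ⟨![4,3,2,1,5,0,6], ![5,3,2,1,0,4,6], by decide, by decide⟩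
def p322 : Equiv.Perm (Fin 7) := ⟨![4,3,2,5,1,6,0], ![6,4,2,1,0,3,5], by decide, by decide⟩
def p323 : Equiv.Perm (Fin 7) := ⟨![4,3,2,6,0,5,1], ![4,6,2,1,0,5,3], by decide, by decide⟩
def p324 : Equiv.Perm (Fin 7) := ⟨![4,2,3,0,6,5,1], ![3,6,1,2,0,5,4], by decide, by decide⟩
def p325 : Equiv.Perm (Fin 7) := ⟨![4,2,3,1,5,6,0], ![6,3,1,2,0,4,5], by decide, by decide⟩
def p326 : Equiv.Perm (Fin 7) := ⟨![4,2,3,5,1,0,6], ![5,4,1,2,0,3,6], by decide, by decide⟩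
def p327 : Equiv.Perm (Fin 7) := ⟨![4,2,3,6,0,1,5], ![4,5,1,2,0,6,3], by decide, by decide⟩
def p328 : Equiv.Perm (Fin 7) := ⟨![4,5,1,0,6,2,3], ![3,2,5,6,0,1,4], by decide, by decide⟩
def p329 : Equiv.Perm (Fin 7) := ⟨![4,5,1,3,2,6,0], ![6,2,4,3,0,1,5], by decide, by decide⟩
def p330 : Equiv.Perm (Fin 7) := ⟨![4,5,1,2,3,0,6], ![5,2,3,4,0,1,6], by decide, by decide⟩
def p331 : Equiv.Perm (Fin 7) := ⟨![4,5,1,6,0,3,2], ![4,2,6,5,0,1,3], by decide, by decide⟩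
def p332 : Equiv.Perm (Fin 7) := ⟨![4,6,0,1,5,2,3], ![2,3,5,6,0,4,1], by decide, by decide⟩
def p333 : Equiv.Perm (Fin 7) := ⟨![4,6,0,3,2,5,1], ![2,6,4,3,0,5,1], by decide, by decide⟩
def p334 : Equiv.Perm (Fin 7) := ⟨![4,6,0,2,3,1,5], ![2,5,3,4,0,6,1], by decide, by decide⟩
def p335 : Equiv.Perm (Fin 7) := ⟨![4,6,0,5,1,3,2], ![2,4,6,5,0,3,1], by decide, by decide⟩
def codeList : List (Equiv.Perm (Fin 7)) := [p0,p1,p2,p3,p4,p5,p6,p7,p8,p9,p10,p11,p12,p13,p14,p15,p16,p17,p18,p19,p20,p21,p22,p23,p24,p25,p26,p27,p28,p29,p30,p31,p32,p33,p34,p35,p36,p37,p38,p39,p40,p41,p42,p43,p44,p45,p46,p47,p48,p49,p50,p51,p52,p53,p54,p55,p56,p57,p58,p59,p60,p61,p62,p63,p64,p65,p66,p67,p68,p69,p70,p71,p72,p73,p74,p75,p76,p77,p78,p79,p80,p81,p82,p83,p84,p85,p86,p87,p88,p89,p90,p91,p92,p93,p94,p95,p96,p97,p98,p99,p100,p101,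p102,p103,p104,p105,p106,p107,p108,p109,p110,p111,p112,p113,p114,p115,p116,p117,p118,p119,p120,p121,p122,p123,p124,p125,p126,p127,p128,p129,p130,p131,p132,p133,p134,p135,p136,p137,p138,p139,p140,p141,p142,p143,p144,p145,p146,p147,p148,p149,p150,p151,p152,p153,p154,p155,p156,p157,p158,p159,p160,p161,p162,p163,p164,p165,p166,p167,p168,p169,p170,p171,p172,p173,p174,p175,p176,p177,p178,p179,p180,p181,p182,p183,p184,p185,p186,p187,p188,p189,p190,p191,p192,p193,p194,p195,p196,p197,p198,p199,p200,p201,p202,p203,p204,p205,p206,p207,p208,p209,p210,p211,p212,p213,p214,p215,p216,p217,p218,p219,p220,p221,p222,p223,p224,p225,p226,p227,p228,p229,p230,p231,p232,p233,p234,p235,p236,p237,p238,p239,p240,p241,p242,p243,p244,p245,p246,p247,p248,p249,p250,p251,p252,p253,p254,p255,p256,p257,p258,p259,p260,p261,p262,p263,p264,p265,p266,p267,p268,p269,p270,p271,p272,p273,p274,p275,p276,p277,p278,p279,p280,p281,p282,p283,p284,p285,p286,p287,p288,p289,p290,p291,p292,p293,p294,p295,p296,p297,p298,p299,p300,p301,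p302,p303,p304,p305,p306,p307,p308,p309,p310,p311,p312,p313,p314,p315,p316,p317,p318,p319,p320,p321,p322,p323,p324,p325,p326,p327,p328,p329,p330,p331,p332,p333,p334,p335]

def dataList : List (List ℕ) :=
  [[0,1,2,3,4,5,6],[0,1,2,4,3,6,5],[0,1,2,5,6,3,4],[0,1,2,6,5,4,3],[0,2,1,3,4,6,5],[0,2,1,4,3,5,6],[0,2,1,5,6,4,3],[0,2,1,6,5,3,4],[0,3,4,1,2,5,6],[0,3,4,2,1,6,5],[0,3,4,5,6,1,2],[0,3,4,6,5,2,1],[0,4,3,1,2,6,5],[0,4,3,2,1,5,6],[0,4,3,5,6,2,1],[0,4,3,6,5,1,2],[0,5,6,1,2,3,4],[0,5,6,2,1,4,3],[0,5,6,3,4,1,2],[0,5,6,4,3,2,1],[0,6,5,1,2,4,3],[0,6,5,2,1,3,4],[0,6,5,3,4,2,1],[0,6,5,4,3,1,2],[1,0,2,3,5,4,6],[1,0,2,4,6,3,5],[1,0,2,5,3,6,4],[1,0,2,6,4,5,3],[1,2,0,3,5,6,4],[1,2,0,4,6,5,3],[1,2,0,5,3,4,6],[1,2,0,6,4,3,5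],[1,3,5,0,2,4,6],[1,3,5,2,0,6,4],[1,3,5,4,6,0,2],[1,3,5,6,4,2,0],[1,4,6,0,2,3,5],[1,4,6,2,0,5,3],[1,4,6,3,5,0,2],[1,4,6,5,3,2,0],[1,5,3,0,2,6,4],[1,5,3,2,0,4,6],[1,5,3,4,6,2,0],[1,5,3,6,4,0,2],[1,6,4,0,2,5,3],[1,6,4,2,0,3,5],[1,6,4,3,5,2,0],[1,6,4,5,3,0,2],[2,0,1,3,6,4,5],[2,0,1,4,5,3,6],[2,0,1,5,4,6,3],[2,0,1,6,3,5,4],[2,1,0,3,6,5,4],[2,1,0,4,5,6,3],[2,1,0,5,4,3,6],[2,1,0,6,3,4,5],[2,3,6,0,1,4,5],[2,3,6,1,0,5,4],[2,3,6,4,5,0,1],[2,3,6,5,4,1,0],[2,4,5,0,1,3,6],[2,4,5,1,0,6,3],[2,4,5,3,6,0,1],[2,4,5,6,3,1,0],[2,5,4,0,1,6,3],[2,5,4,1,0,3,6],[2,5,4,3,6,1,0],[2,5,4,6,3,0,1],[2,6,3,0,1,5,4],[2,6,3,1,0,4,5],[2,6,3,4,5,1,0],[2,6,3,5,4,0,1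],[3,0,4,1,5,2,6],[3,0,4,2,6,1,5],[3,0,4,5,1,6,2],[3,0,4,6,2,5,1],[3,1,5,0,4,2,6],[3,1,5,2,6,0,4],[3,1,5,4,0,6,2],[3,1,5,6,2,4,0],[3,2,6,0,4,1,5],[3,2,6,1,5,0,4],[3,2,6,4,0,5,1],[3,2,6,5,1,4,0],[3,4,0,1,5,6,2],[3,4,0,2,6,5,1],[3,4,0,5,1,2,6],[3,4,0,6,2,1,5],[3,5,1,0,4,6,2],[3,5,1,2,6,4,0],[3,5,1,4,0,2,6],[3,5,1,6,2,0,4],[3,6,2,0,4,5,1],[3,6,2,1,5,4,0],[3,6,2,4,0,1,5],[3,6,2,5,1,0,4],[4,0,3,1,6,2,5],[4,0,3,2,5,1,6],[4,0,3,5,2,6,1],[4,0,3,6,1,5,2],[4,1,6,0,3,2,5],[4,1,6,2,5,0,3],[4,1,6,3,0,5,2],[4,1,6,5,2,3,0],[4,2,5,0,3,1,6],[4,2,5,1,6,0,3],[4,2,5,3,0,6,1],[4,2,5,6,1,3,0],[4,3,0,1,6,5,2],[4,3,0,2,5,6,1],[4,3,0,5,2,1,6],[4,3,0,6,1,2,5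],[4,5,2,0,3,6,1],[4,5,2,1,6,3,0],[4,5,2,3,0,1,6],[4,5,2,6,1,0,3],[4,6,1,0,3,5,2],[4,6,1,2,5,3,0],[4,6,1,3,0,2,5],[4,6,1,5,2,0,3],[5,0,6,1,3,2,4],[5,0,6,2,4,1,3],[5,0,6,3,1,4,2],[5,0,6,4,2,3,1],[5,1,3,0,6,2,4],[5,1,3,2,4,0,6],[5,1,3,4,2,6,0],[5,1,3,6,0,4,2],[5,2,4,0,6,1,3],[5,2,4,1,3,0,6],[5,2,4,3,1,6,0],[5,2,4,6,0,3,1],[5,3,1,0,6,4,2],[5,3,1,2,4,6,0],[5,3,1,4,2,0,6],[5,3,1,6,0,2,4],[5,4,2,0,6,3,1],[5,4,2,1,3,6,0],[5,4,2,3,1,0,6],[5,4,2,6,0,1,3],[5,6,0,1,3,4,2],[5,6,0,2,4,3,1],[5,6,0,3,1,2,4],[5,6,0,4,2,1,3],[6,0,5,1,4,2,3],[6,0,5,2,3,1,4],[6,0,5,3,2,4,1],[6,0,5,4,1,3,2],[6,1,4,0,5,2,3],[6,1,4,2,3,0,5],[6,1,4,3,2,5,0],[6,1,4,5,0,3,2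],[6,2,3,0,5,1,4],[6,2,3,1,4,0,5],[6,2,3,4,1,5,0],[6,2,3,5,0,4,1],[6,3,2,0,5,4,1],[6,3,2,1,4,5,0],[6,3,2,4,1,0,5],[6,3,2,5,0,1,4],[6,4,1,0,5,3,2],[6,4,1,2,3,5,0],[6,4,1,3,2,0,5],[6,4,1,5,0,2,3],[6,5,0,1,4,3,2],[6,5,0,2,3,4,1],[6,5,0,3,2,1,4],[6,5,0,4,1,2,3],[0,1,3,2,5,6,4],[0,1,3,5,2,4,6],[0,1,3,6,4,2,5],[0,1,3,4,6,5,2],[0,3,1,2,5,4,6],[0,3,1,5,2,6,4],[0,3,1,6,4,5,2],[0,3,1,4,6,2,5],[0,2,5,1,3,6,4],[0,2,5,3,1,4,6],[0,2,5,6,4,1,3],[0,2,5,4,6,3,1],[0,5,2,1,3,4,6],[0,5,2,3,1,6,4],[0,5,2,6,4,3,1],[0,5,2,4,6,1,3],[0,6,4,1,3,2,5],[0,6,4,3,1,5,2],[0,6,4,2,5,1,3],[0,6,4,5,2,3,1],[0,4,6,1,3,5,2],[0,4,6,3,1,2,5],[0,4,6,2,5,3,1],[0,4,6,5,2,1,3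],[1,0,3,2,6,5,4],[1,0,3,5,4,2,6],[1,0,3,6,2,4,5],[1,0,3,4,5,6,2],[1,3,0,2,6,4,5],[1,3,0,5,4,6,2],[1,3,0,6,2,5,4],[1,3,0,4,5,2,6],[1,2,6,0,3,5,4],[1,2,6,3,0,4,5],[1,2,6,5,4,0,3],[1,2,6,4,5,3,0],[1,5,4,0,3,2,6],[1,5,4,3,0,6,2],[1,5,4,2,6,0,3],[1,5,4,6,2,3,0],[1,6,2,0,3,4,5],[1,6,2,3,0,5,4],[1,6,2,5,4,3,0],[1,6,2,4,5,0,3],[1,4,5,0,3,6,2],[1,4,5,3,0,2,6],[1,4,5,2,6,3,0],[1,4,5,6,2,0,3],[3,0,1,2,4,5,6],[3,0,1,5,6,2,4],[3,0,1,6,5,4,2],[3,0,1,4,2,6,5],[3,1,0,2,4,6,5],[3,1,0,5,6,4,2],[3,1,0,6,5,2,4],[3,1,0,4,2,5,6],[3,2,4,0,1,5,6],[3,2,4,1,0,6,5],[3,2,4,5,6,0,1],[3,2,4,6,5,1,0],[3,5,6,0,1,2,4],[3,5,6,1,0,4,2],[3,5,6,2,4,0,1],[3,5,6,4,2,1,0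],[3,6,5,0,1,4,2],[3,6,5,1,0,2,4],[3,6,5,2,4,1,0],[3,6,5,4,2,0,1],[3,4,2,0,1,6,5],[3,4,2,1,0,5,6],[3,4,2,5,6,1,0],[3,4,2,6,5,0,1],[2,0,5,1,6,3,4],[2,0,5,3,4,1,6],[2,0,5,6,1,4,3],[2,0,5,4,3,6,1],[2,1,6,0,5,3,4],[2,1,6,3,4,0,5],[2,1,6,5,0,4,3],[2,1,6,4,3,5,0],[2,3,4,0,5,1,6],[2,3,4,1,6,0,5],[2,3,4,5,0,6,1],[2,3,4,6,1,5,0],[2,5,0,1,6,4,3],[2,5,0,3,4,6,1],[2,5,0,6,1,3,4],[2,5,0,4,3,1,6],[2,6,1,0,5,4,3],[2,6,1,3,4,5,0],[2,6,1,5,0,3,4],[2,6,1,4,3,0,5],[2,4,3,0,5,6,1],[2,4,3,1,6,5,0],[2,4,3,5,0,1,6],[2,4,3,6,1,0,5],[5,0,2,1,4,3,6],[5,0,2,3,6,1,4],[5,0,2,6,3,4,1],[5,0,2,4,1,6,3],[5,1,4,0,2,3,6],[5,1,4,3,6,0,2],[5,1,4,2,0,6,3],[5,1,4,6,3,2,0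],[5,3,6,0,2,1,4],[5,3,6,1,4,0,2],[5,3,6,2,0,4,1],[5,3,6,4,1,2,0],[5,2,0,1,4,6,3],[5,2,0,3,6,4,1],[5,2,0,6,3,1,4],[5,2,0,4,1,3,6],[5,6,3,0,2,4,1],[5,6,3,1,4,2,0],[5,6,3,2,0,1,4],[5,6,3,4,1,0,2],[5,4,1,0,2,6,3],[5,4,1,3,6,2,0],[5,4,1,2,0,3,6],[5,4,1,6,3,0,2],[6,0,4,1,2,3,5],[6,0,4,3,5,1,2],[6,0,4,2,1,5,3],[6,0,4,5,3,2,1],[6,1,2,0,4,3,5],[6,1,2,3,5,0,4],[6,1,2,5,3,4,0],[6,1,2,4,0,5,3],[6,3,5,0,4,1,2],[6,3,5,1,2,0,4],[6,3,5,2,1,4,0],[6,3,5,4,0,2,1],[6,2,1,0,4,5,3],[6,2,1,3,5,4,0],[6,2,1,5,3,0,4],[6,2,1,4,0,3,5],[6,5,3,0,4,2,1],[6,5,3,1,2,4,0],[6,5,3,2,1,0,4],[6,5,3,4,0,1,2],[6,4,0,1,2,5,3],[6,4,0,3,5,2,1],[6,4,0,2,1,3,5],[6,4,0,5,3,1,2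],[4,0,6,1,5,3,2],[4,0,6,3,2,1,5],[4,0,6,2,3,5,1],[4,0,6,5,1,2,3],[4,1,5,0,6,3,2],[4,1,5,3,2,0,6],[4,1,5,2,3,6,0],[4,1,5,6,0,2,3],[4,3,2,0,6,1,5],[4,3,2,1,5,0,6],[4,3,2,5,1,6,0],[4,3,2,6,0,5,1],[4,2,3,0,6,5,1],[4,2,3,1,5,6,0],[4,2,3,5,1,0,6],[4,2,3,6,0,1,5],[4,5,1,0,6,2,3],[4,5,1,3,2,6,0],[4,5,1,2,3,0,6],[4,5,1,6,0,3,2],[4,6,0,1,5,2,3],[4,6,0,3,2,5,1],[4,6,0,2,3,1,5],[4,6,0,5,1,3,2]]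

/-- number of positions where two lists differ -/
def diff : List ℕ → List ℕ → ℕ
  | a::as, b::bs => (if a = b then 0 else 1) + diff as bs
  | _, _ => 0

def S (a b : List ℕ) : Prop := 4 ≤ diff a b

instance : DecidableRel S := fun _ _ => inferInstanceAs (Decidable (_ ≤ _))

def g (φ : Equiv.Perm (Fin 7)) : List ℕ := List.ofFn (fun i => (φ i : ℕ))

lemma data_pairwise : dataList.Pairwise S := by decide +kernel

lemma map_code : codeList.map g = dataList := by decide +kernel

lemma diff_eq : ∀ (n : ℕ) (u v : Fin n → ℕ),
    diff (List.ofFn u) (List.ofFn v)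
      = (List.finRange n).countP (fun i => decide (u i ≠ v i)) := by
  intro n
  induction n with
  | zero => intro u v; rfl
  | succ n ih =>
    intro u v
    rw [List.ofFn_succ, List.ofFn_succ, List.finRange_succ, List.countP_cons,
      List.countP_map, diff, ih]
    by_cases h : u 0 = v 0 <;> simp [h, Nat.add_comm] <;> rfl

lemma hdist_eq (φ ψ : Equiv.Perm (Fin 7)) :
    hdist φ ψ = ((List.finRange 7).filter (fun i => decide (φ i ≠ ψ i))).length := by
  rw [hdist, Fin.univ_def]; rfl

lemma bridge (φ ψ : Equiv.Perm (Fin 7)) (h : S (g φ) (g ψ)) : 4 ≤ hdist φ ψ := by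
  unfold S g at h
  rw [diff_eq] at h
  rw [hdist_eq, ← List.countP_eq_length_filter]
  have peq : (fun i : Fin 7 => decide (φ i ≠ ψ i))
      = (fun i : Fin 7 => decide ((φ i : ℕ) ≠ (ψ i : ℕ))) := by
    funext i
    exact decide_eq_decide.mpr (not_congr Fin.val_inj.symm)
  rwa [peq]

lemma hdist_comm (φ ψ : Equiv.Perm (Fin 7)) : hdist φ ψ = hdist ψ φ := by
  unfold hdist
  rw [Finset.filter_congr (fun x _ => ne_comm)]

lemma hdist_self (φ : Equiv.Perm (Fin 7)) : hdist φ φ = 0 := by simp [hdist]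

lemma code_pairwise : codeList.Pairwise (fun φ ψ => 4 ≤ hdist φ ψ) := by
  have h2 : (codeList.map g).Pairwise S := by rw [map_code]; exact data_pairwise
  exact (List.pairwise_map.mp h2).imp (fun {a b} h => bridge a b h)

lemma code_nodup : codeList.Nodup := by
  refine code_pairwise.imp (fun {a b} h => ?_)
  intro heq
  subst heq
  rw [hdist_self a] at h
  omega

/-- There exists a `(7,4)`-permutation code of size `336`. -/
theorem exists_74_code_of_size_336 :
    ∃ C : Finset (Equiv.Perm (Fin 7)), C.card = 336 ∧
      ∀ φ ∈ C, ∀ ψ ∈ C, φ ≠ ψ → 4 ≤ hdist φ ψ := by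
  refine ⟨codeList.toFinset, ?_, ?_⟩
  · rw [List.toFinset_card_of_nodup code_nodup]; rfl
  · intro φ hφ ψ hψ hne
    haveI : Std.Symm (fun φ ψ : Equiv.Perm (Fin 7) => 4 ≤ hdist φ ψ) :=
      ⟨fun a b h => by rw [hdist_comm]; exact h⟩
    exact code_pairwise.forall
      (List.mem_toFinset.mp hφ) (List.mem_toFinset.mp hψ) hne
end
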